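/- arXiv:2603.24845 — 4 statements merged into one kernel-verified Lean document; each statement's English description precedes it below -/
import Mathlib

section
/- Let 0 < |q| < 1 and let a, b be complex numbers such that q^{b+1+k} ≠ 1 for all integers k ≥ 0 (so the lower-parameter q-shifted factorials (q^{b+2};q)_n are nonzero and 1 - q^{b+1} ≠ 0), q^{a+b} ≠ 1, and such that λ := (1-q^b) q^{a+1} / (1-q^{a+b}) satisfies |λ| < 1. Then ∑_{n=0}^∞ [(q^{1-a};q)_n (q^b;q)_n / ((q;q)_n (q^{b+2};q)_n)] λ^n = [(1-q^{b+1})/(1-q)] · (λ q^{-a};q)_∞ / (λ;q)_∞. -/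
open Filter Finset Complex Topology

set_option maxHeartbeats 1600000

/-- The finite `q`-shifted factorial `(a;q)_n = ∏_{k=0}^{n-1} (1 - a q^k)`. -/
noncomputable def qPoch (a q : ℂ) (n : ℕ) : ℂ :=
  ∏ k ∈ Finset.range n, (1 - a * q ^ k)

/-- The infinite `q`-shifted factorial `(a;q)_∞ = ∏_{k=0}^{∞} (1 - a q^k)`. -/
noncomputable def qPochInf (a q : ℂ) : ℂ :=
  ∏' k : ℕ, (1 - a * q ^ k)

noncomputable def cseq (A q : ℂ) (n : ℕ) : ℂ := qPoch A q n / qPoch q q n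

lemma yg_one_sub_ne {x : ℂ} (hx : ‖x‖ < 1) : (1 : ℂ) - x ≠ 0 := by
  intro h
  rw [sub_eq_zero] at h
  rw [← h] at hx
  simp at hx

lemma yg_tendsto_mul_pow (x q : ℂ) (hq : ‖q‖ < 1) :
    Tendsto (fun n : ℕ => x * q ^ n) atTop (𝓝 0) := by
  simpa using tendsto_const_nhds.mul (tendsto_pow_atTop_nhds_zero_of_norm_lt_one hq)

lemma yg_tendsto_one_sub (x q : ℂ) (hq : ‖q‖ < 1) :
    Tendsto (fun n : ℕ => 1 - x * q ^ n) atTop (𝓝 1) := by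
  simpa using tendsto_const_nhds.sub (yg_tendsto_mul_pow x q hq)

lemma yg_summable_log (x q : ℂ) (hq : ‖q‖ < 1) :
    Summable (fun k : ℕ => Complex.log (1 - x * q ^ k)) := by
  have h2 : ∀ᶠ k in atTop, ‖x * q ^ k‖ ≤ 1/2 := by
    have := (yg_tendsto_mul_pow x q hq).norm
    simp only [norm_zero] at this
    exact this.eventually_le_const (by norm_num)
  obtain ⟨N, hN⟩ := eventually_atTop.mp h2
  rw [← summable_nat_add_iff N]
  apply Summable.of_norm_bounded (g := fun k : ℕ => (3/2) * (‖x‖ * ‖q‖ ^ N) * ‖q‖ ^ k)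
  · apply Summable.mul_left
    exact summable_geometric_of_lt_one (norm_nonneg q) hq
  · intro k
    have hb : ‖-(x * q ^ (k + N))‖ ≤ 1/2 := by
      rw [norm_neg]; exact hN (k + N) (by omega)
    have := Complex.norm_log_one_add_half_le_self hb
    have heq : (1 : ℂ) + -(x * q ^ (k + N)) = 1 - x * q ^ (k + N) := by ring
    rw [heq] at this
    refine this.trans ?_
    rw [norm_neg, norm_mul, norm_pow]
    have : ‖q‖ ^ (k + N) = ‖q‖ ^ N * ‖q‖ ^ k := by rw [pow_add]; ring
    rw [this]
    ring_nf
    nlinarith [norm_nonneg x, pow_nonneg (norm_nonneg q) k, pow_nonneg (norm_nonneg q) N]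

lemma yg_multipliable (x q : ℂ) (hq : ‖q‖ < 1) :
    Multipliable (fun k : ℕ => 1 - x * q ^ k) := by
  by_cases h : ∀ k : ℕ, 1 - x * q ^ k ≠ 0
  · exact Complex.multipliable_of_summable_log (yg_summable_log x q hq)
  · push_neg at h
    obtain ⟨k0, hk0⟩ := h
    refine ⟨0, ?_⟩
    rw [HasProd]
    have : ∀ᶠ s : Finset ℕ in atTop, ∏ i ∈ s, (1 - x * q ^ i) = 0 := by
      filter_upwards [eventually_ge_atTop {k0}] with s hs
      exact Finset.prod_eq_zero (hs (Finset.mem_singleton_self k0)) hk0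
    exact Tendsto.congr' (this.mono fun s hs => hs.symm) tendsto_const_nhds

lemma yg_tprod_ne_zero (x q : ℂ) (hq : ‖q‖ < 1) (hx : ∀ k : ℕ, (1:ℂ) - x * q ^ k ≠ 0) :
    (∏' k : ℕ, (1 - x * q ^ k)) ≠ 0 := by
  have := Complex.cexp_tsum_eq_tprod (f := fun k : ℕ => 1 - x * q ^ k) hx
    (yg_summable_log x q hq)
  rw [← this]
  exact Complex.exp_ne_zero _

lemma yg_pow_lt_one {q : ℂ} (hq : ‖q‖ < 1) (n : ℕ) : ‖q ^ (n+1)‖ < 1 := by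
  rw [norm_pow]
  calc ‖q‖ ^ (n+1) ≤ ‖q‖ ^ 1 := pow_le_pow_of_le_one (norm_nonneg q) hq.le (by omega)
  _ < 1 := by simpa using hq

lemma yg_qPoch_q_ne_zero {q : ℂ} (hq : ‖q‖ < 1) (n : ℕ) : qPoch q q n ≠ 0 := by
  rw [qPoch]
  apply Finset.prod_ne_zero_iff.mpr
  intro k _
  have : q * q ^ k = q ^ (k+1) := by ring
  rw [this]
  exact yg_one_sub_ne (yg_pow_lt_one hq k)

lemma qPoch_succ (a q : ℂ) (n : ℕ) :
    qPoch a q (n+1) = qPoch a q n * (1 - a * q ^ n) := Finset.prod_range_succ _ _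

lemma cseq_zero (A q : ℂ) : cseq A q 0 = 1 := by simp [cseq, qPoch]

lemma cseq_succ {q : ℂ} (hq : ‖q‖ < 1) (A : ℂ) (n : ℕ) :
    cseq A q (n+1) = cseq A q n * ((1 - A * q ^ n) / (1 - q ^ (n+1))) := by
  have h1 : (1:ℂ) - q ^ (n+1) ≠ 0 := yg_one_sub_ne (yg_pow_lt_one hq n)
  have h2 := yg_qPoch_q_ne_zero hq n
  rw [cseq, cseq, qPoch, qPoch, Finset.prod_range_succ, Finset.prod_range_succ]
  rw [← qPoch, ← qPoch]
  have : q * q ^ n = q ^ (n+1) := by ring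
  rw [this]
  field_simp

/-- workhorse summability: `cseq A q n * z^n * e n` with `e` having ratio → 1. -/
lemma yg_summable {q : ℂ} (hq : ‖q‖ < 1) (A : ℂ) {z : ℂ} (hz : ‖z‖ < 1)
    (e : ℕ → ℂ) (he0 : ∀ n, e n ≠ 0)
    (her : Tendsto (fun n => e (n+1) / e n) atTop (𝓝 1)) :
    Summable (fun n => cseq A q n * z ^ n * e n) := by
  set r : ℝ := (1 + ‖z‖)/2 with hr
  have hr1 : r < 1 := by rw [hr]; linarith
  have hzr : ‖z‖ < r := by rw [hr]; linarith
  apply summable_of_ratio_norm_eventually_le hr1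
  have hrho : Tendsto
      (fun n => ((1 - A * q ^ n) / (1 - q * q ^ n)) * z * (e (n+1) / e n)) atTop (𝓝 z) := by
    have t0 : Tendsto (fun n : ℕ => q ^ n) atTop (𝓝 0) :=
      tendsto_pow_atTop_nhds_zero_of_norm_lt_one hq
    have t1 : Tendsto (fun n : ℕ => 1 - A * q ^ n) atTop (𝓝 1) := by
      simpa using tendsto_const_nhds.sub (tendsto_const_nhds.mul t0)
    have t2 : Tendsto (fun n : ℕ => 1 - q * q ^ n) atTop (𝓝 1) := by
      simpa using tendsto_const_nhds.sub (tendsto_const_nhds.mul t0)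
    have := ((t1.div t2 one_ne_zero).mul
      (tendsto_const_nhds : Tendsto (fun _ : ℕ => z) atTop (𝓝 z))).mul her
    simpa using this
  have hev : ∀ᶠ n in atTop,
      ‖((1 - A * q ^ n) / (1 - q * q ^ n)) * z * (e (n+1) / e n)‖ ≤ r :=
    hrho.norm.eventually_le_const hzr
  filter_upwards [hev] with n hn
  have hD : (1:ℂ) - q * q ^ n ≠ 0 := by
    have : q * q ^ n = q ^ (n+1) := by ring
    rw [this]; exact yg_one_sub_ne (yg_pow_lt_one hq n)
  have key : cseq A q (n+1) * z ^ (n+1) * e (n+1)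
      = (cseq A q n * z ^ n * e n) * (((1 - A * q ^ n) / (1 - q * q ^ n)) * z * (e (n+1) / e n)) := by
    rw [cseq_succ hq A n]
    have : q ^ (n+1) = q * q ^ n := by ring
    rw [this]
    field_simp [he0 n]
    ring
  rw [key, norm_mul]
  exact (mul_le_mul_of_nonneg_left hn (norm_nonneg _)).trans_eq (mul_comm _ _)

lemma yg_summable' {q : ℂ} (hq : ‖q‖ < 1) (A : ℂ) {z : ℂ} (hz : ‖z‖ < 1) :
    Summable (fun n => cseq A q n * z ^ n) := by
  have := yg_summable hq A hz (fun _ => 1) (fun _ => one_ne_zero)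
    (by simpa using (tendsto_const_nhds : Tendsto (fun _ : ℕ => (1:ℂ)) atTop (𝓝 1)))
  simpa using this

lemma yg_summable_P0 {q : ℂ} (hq : ‖q‖ < 1) (A : ℂ) {z : ℂ} (hz : ‖z‖ < 1) {w : ℂ}
    (hw : ∀ n : ℕ, (1:ℂ) - w * q ^ n ≠ 0) :
    Summable (fun n => cseq A q n * z ^ n * (1 - w * q ^ n)⁻¹) := by
  apply yg_summable hq A hz (fun n => (1 - w * q ^ n)⁻¹) (fun n => inv_ne_zero (hw n))
  have hshow : (fun n : ℕ => (1 - w * q ^ (n+1))⁻¹ / (1 - w * q ^ n)⁻¹)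
      = fun n => (1 - w * q ^ n) / (1 - (w * q) * q ^ n) := by
    funext n
    rw [inv_div_inv]
    congr 1
    ring
  show Tendsto (fun n : ℕ => (1 - w * q ^ (n+1))⁻¹ / (1 - w * q ^ n)⁻¹) atTop (𝓝 1)
  rw [hshow]
  have := (yg_tendsto_one_sub w q hq).div (yg_tendsto_one_sub (w*q) q hq) one_ne_zero
  simpa [Pi.div_def] using this

lemma yg_summable_P1 {q : ℂ} (hq : ‖q‖ < 1) (A : ℂ) {z : ℂ} (hz : ‖z‖ < 1) {w : ℂ}
    (hw : ∀ n : ℕ, (1:ℂ) - w * q ^ (n+1) ≠ 0) :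
    Summable (fun n => cseq A q n * z ^ n * (1 - w * q ^ (n+1))⁻¹) := by
  apply yg_summable hq A hz (fun n => (1 - w * q ^ (n+1))⁻¹) (fun n => inv_ne_zero (hw n))
  have hshow : (fun n : ℕ => (1 - w * q ^ (n+1+1))⁻¹ / (1 - w * q ^ (n+1))⁻¹)
      = fun n => (1 - (w * q) * q ^ n) / (1 - (w * q * q) * q ^ n) := by
    funext n
    rw [inv_div_inv]
    congr 1 <;> ring
  show Tendsto (fun n : ℕ => (1 - w * q ^ (n+1+1))⁻¹ / (1 - w * q ^ (n+1))⁻¹) atTop (𝓝 1)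
  rw [hshow]
  have := (yg_tendsto_one_sub (w*q) q hq).div (yg_tendsto_one_sub (w*q*q) q hq) one_ne_zero
  simpa [Pi.div_def] using this

lemma yg_norm_mul_lt {q z : ℂ} (hq : ‖q‖ < 1) (hz : ‖z‖ < 1) : ‖q * z‖ < 1 := by
  rw [norm_mul]
  nlinarith [norm_nonneg q, norm_nonneg z]

lemma yg_onestep {q : ℂ} (hq : ‖q‖ < 1) (A : ℂ) {u : ℂ} (hu : ‖u‖ < 1) :
    (1 - u) * ∑' n, cseq A q n * u ^ n = (1 - A * u) * ∑' n, cseq A q n * (q * u) ^ n := by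
  have S1 : Summable (fun n => cseq A q n * u ^ n) := yg_summable' hq A hu
  have S2 : Summable (fun n => cseq A q n * (q * u) ^ n) :=
    yg_summable' hq A (yg_norm_mul_lt hq hu)
  set T0 := ∑' n, cseq A q n * u ^ n
  set T1 := ∑' n, cseq A q n * (q * u) ^ n
  have hX : Summable (fun n => cseq A q n * u ^ n * (1 - q ^ n)) := by
    apply (S1.sub S2).congr
    intro n
    rw [mul_pow]
    ring
  have claim1 : ∑' n, cseq A q n * u ^ n * (1 - q ^ n) = T0 - T1 := by
    rw [← Summable.tsum_sub S1 S2]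
    apply tsum_congr
    intro n
    rw [mul_pow]
    ring
  have claim2 : ∑' n, cseq A q n * u ^ n * (1 - q ^ n)
      = ∑' n, cseq A q n * (1 - A * q ^ n) * u ^ (n+1) := by
    rw [Summable.tsum_eq_zero_add hX]
    simp only [pow_zero, sub_self, mul_zero, zero_add]
    apply tsum_congr
    intro n
    rw [cseq_succ hq A n]
    have h1 : (1:ℂ) - q ^ (n+1) ≠ 0 := yg_one_sub_ne (yg_pow_lt_one hq n)
    field_simp
  have claim3 : ∑' n, cseq A q n * (1 - A * q ^ n) * u ^ (n+1) = u * T0 - A * u * T1 := by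
    rw [← tsum_mul_left (a := u), ← tsum_mul_left (a := A * u),
      ← Summable.tsum_sub (S1.mul_left u) (S2.mul_left (A * u))]
    apply tsum_congr
    intro n
    rw [mul_pow]
    ring
  have main : T0 - T1 = u * T0 - A * u * T1 := by rw [← claim1, claim2, claim3]
  linear_combination main

lemma yg_iter {q : ℂ} (hq : ‖q‖ < 1) (A : ℂ) {z : ℂ} (hz : ‖z‖ < 1) (M : ℕ) :
    (∑' n, cseq A q n * z ^ n) * qPoch z q M
      = qPoch (A * z) q M * ∑' n, cseq A q n * (q ^ M * z) ^ n := by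
  induction M with
  | zero => simp [qPoch]
  | succ M IH =>
    have hu : ‖q ^ M * z‖ < 1 := by
      rw [norm_mul, norm_pow]
      have h1 : ‖q‖ ^ M ≤ 1 := pow_le_one₀ (norm_nonneg q) hq.le
      nlinarith [norm_nonneg z, pow_nonneg (norm_nonneg q) M]
    have hstep := yg_onestep hq A hu
    have harg : q * (q ^ M * z) = q ^ (M+1) * z := by ring
    rw [harg] at hstep
    rw [qPoch_succ, qPoch_succ]
    set Tz := ∑' n, cseq A q n * z ^ n
    set U := ∑' n, cseq A q n * (q ^ M * z) ^ n
    set V := ∑' n, cseq A q n * (q ^ (M+1) * z) ^ n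
    set P1 := qPoch z q M
    set P2 := qPoch (A * z) q M
    linear_combination (1 - z * q ^ M) * IH + P2 * hstep

lemma yg_tendsto_fz {q : ℂ} (hq : ‖q‖ < 1) (A : ℂ) {z : ℂ} (hz : ‖z‖ < 1) :
    Tendsto (fun M : ℕ => ∑' n, cseq A q n * (q ^ M * z) ^ n) atTop (𝓝 1) := by
  have hnormsum : Summable (fun n => ‖cseq A q n * z ^ n‖) :=
    (summable_norm_iff.mpr (yg_summable' hq A hz))
  have htail : Summable (fun n => ‖cseq A q (n+1) * z ^ (n+1)‖) := by
    exact (summable_nat_add_iff 1).mpr hnormsum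
  set R := ∑' n, ‖cseq A q (n+1) * z ^ (n+1)‖
  have hbound : ∀ M : ℕ, ‖(∑' n, cseq A q n * (q ^ M * z) ^ n) - 1‖ ≤ R * ‖q‖ ^ M := by
    intro M
    have hu : ‖q ^ M * z‖ < 1 := by
      rw [norm_mul, norm_pow]
      have h1 : ‖q‖ ^ M ≤ 1 := pow_le_one₀ (norm_nonneg q) hq.le
      nlinarith [norm_nonneg z, pow_nonneg (norm_nonneg q) M]
    have SU : Summable (fun n => cseq A q n * (q ^ M * z) ^ n) := yg_summable' hq A hu
    have expand : (∑' n, cseq A q n * (q ^ M * z) ^ n)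
        = 1 + ∑' n, cseq A q (n+1) * (q ^ M * z) ^ (n+1) := by
      rw [Summable.tsum_eq_zero_add SU]
      simp [cseq_zero]
    rw [expand]
    rw [add_sub_cancel_left]
    have SUtail : Summable (fun n => ‖cseq A q (n+1) * (q ^ M * z) ^ (n+1)‖) :=
      (summable_nat_add_iff 1).mpr (summable_norm_iff.mpr SU)
    refine (norm_tsum_le_tsum_norm
      (f := fun n => cseq A q (n+1) * (q ^ M * z) ^ (n+1)) SUtail).trans ?_
    have hpt : ∀ n : ℕ, ‖cseq A q (n+1) * (q ^ M * z) ^ (n+1)‖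
        ≤ ‖cseq A q (n+1) * z ^ (n+1)‖ * ‖q‖ ^ M := by
      intro n
      rw [norm_mul, norm_mul, mul_pow, norm_mul, norm_pow, norm_pow, norm_pow]
      have hqM : (‖q‖ ^ M) ^ (n+1) ≤ ‖q‖ ^ M := by
        apply pow_le_of_le_one (pow_nonneg (norm_nonneg q) M)
          (pow_le_one₀ (norm_nonneg q) hq.le) (by omega)
      calc ‖cseq A q (n+1)‖ * ((‖q‖ ^ M) ^ (n+1) * ‖z‖ ^ (n+1))
          ≤ ‖cseq A q (n+1)‖ * (‖q‖ ^ M * ‖z‖ ^ (n+1)) := by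
            apply mul_le_mul_of_nonneg_left _ (norm_nonneg _)
            apply mul_le_mul_of_nonneg_right hqM (pow_nonneg (norm_nonneg z) _)
        _ = ‖cseq A q (n+1)‖ * ‖z‖ ^ (n+1) * ‖q‖ ^ M := by ring
    refine (Summable.tsum_le_tsum hpt SUtail (htail.mul_right _)).trans_eq ?_
    rw [tsum_mul_right]
  have hg : Tendsto (fun M : ℕ => R * ‖q‖ ^ M) atTop (𝓝 0) := by
    simpa using tendsto_const_nhds.mul
      (tendsto_pow_atTop_nhds_zero_of_lt_one (norm_nonneg q) hq)
  have h0 : Tendsto (fun M : ℕ => (∑' n, cseq A q n * (q ^ M * z) ^ n) - 1) atTop (𝓝 0) :=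
    squeeze_zero_norm hbound hg
  simpa using h0.add_const 1

lemma yg_qbinomial {q : ℂ} (hq : ‖q‖ < 1) (A : ℂ) {z : ℂ} (hz : ‖z‖ < 1) :
    (∑' n, cseq A q n * z ^ n) * (∏' k : ℕ, (1 - z * q ^ k))
      = ∏' k : ℕ, (1 - A * z * q ^ k) := by
  have t1 : Tendsto (fun M : ℕ => (∑' n, cseq A q n * z ^ n) * qPoch z q M) atTop
      (𝓝 ((∑' n, cseq A q n * z ^ n) * ∏' k : ℕ, (1 - z * q ^ k))) :=
    tendsto_const_nhds.mul ((yg_multipliable z q hq).hasProd.tendsto_prod_nat.congr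
      (fun M => by rw [← qPoch]))
  have t2 : Tendsto (fun M : ℕ => qPoch (A * z) q M * ∑' n, cseq A q n * (q ^ M * z) ^ n) atTop
      (𝓝 ((∏' k : ℕ, (1 - A * z * q ^ k)) * 1)) :=
    (((yg_multipliable (A * z) q hq).hasProd.tendsto_prod_nat.congr
      (fun M => by rw [← qPoch])).mul (yg_tendsto_fz hq A hz))
  rw [mul_one] at t2
  exact tendsto_nhds_unique (t1.congr fun M => yg_iter hq A hz M) t2

/-- Yamaguchi's `q`-analogue of Gosper's strange series evaluation. -/
theorem yamaguchi_q_gosper (q a b lam : ℂ)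
    (hq0 : 0 < ‖q‖) (hq1 : ‖q‖ < 1)
    (hb : ∀ k : ℕ, q ^ (b + 1 + (k : ℂ)) ≠ 1)
    (hab : q ^ (a + b) ≠ 1)
    (hlam : lam = (1 - q ^ b) * q ^ (a + 1) / (1 - q ^ (a + b)))
    (hlam1 : ‖lam‖ < 1) :
    ∑' n : ℕ, qPoch (q ^ (1 - a)) q n * qPoch (q ^ b) q n /
        (qPoch q q n * qPoch (q ^ (b + 2)) q n) * lam ^ n
      = (1 - q ^ (b + 1)) / (1 - q) *
        (qPochInf (lam * q ^ (-a)) q / qPochInf lam q) := by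
  have hqn : ‖q‖ < 1 := hq1
  have hlamn : ‖lam‖ < 1 := hlam1
  have hq0' : q ≠ 0 := by
    intro h; rw [h] at hq0; simp at hq0
  have hqane : q ^ (a:ℂ) ≠ 0 := by
    rw [Complex.cpow_def_of_ne_zero hq0']; exact Complex.exp_ne_zero _
  set A := q ^ ((1:ℂ) - a) with hAdef
  set w := q ^ (b:ℂ) with hwdef
  set lam' := lam * q ^ (-a) with hlam'def
  have hA : A = q * (q ^ (a:ℂ))⁻¹ := by
    rw [hAdef, show (1:ℂ) - a = 1 + (-a) by ring, Complex.cpow_add _ _ hq0',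
      Complex.cpow_one, Complex.cpow_neg]
  have hlam'q : lam' = lam * (q ^ (a:ℂ))⁻¹ := by
    rw [hlam'def, Complex.cpow_neg]
  have hqb1 : q ^ (b + 1) = w * q := by
    rw [Complex.cpow_add _ _ hq0', Complex.cpow_one, hwdef]
  have hqb2 : q ^ (b + 2) = w * q ^ (2:ℕ) := by
    rw [show b + 2 = b + ((2:ℕ):ℂ) by norm_num, Complex.cpow_add _ _ hq0',
      Complex.cpow_natCast, hwdef]
  have hqab : q ^ (a + b) = q ^ (a:ℂ) * w := by
    rw [Complex.cpow_add _ _ hq0', hwdef]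
  have hqa1 : q ^ (a + 1) = q ^ (a:ℂ) * q := by
    rw [Complex.cpow_add _ _ hq0', Complex.cpow_one]
  have hP : ∀ k : ℕ, (1:ℂ) - w * q ^ (k+1) ≠ 0 := by
    intro k
    have h1 : q ^ (b + 1 + (k:ℂ)) = w * q ^ (k+1) := by
      rw [show b + 1 + (k:ℂ) = b + (((k+1:ℕ)):ℂ) by push_cast; ring,
        Complex.cpow_add _ _ hq0', Complex.cpow_natCast, hwdef]
    have h2 := hb k
    rw [h1] at h2
    exact sub_ne_zero.mpr (Ne.symm h2)
  have h1qaw : (1:ℂ) - q ^ (a:ℂ) * w ≠ 0 := by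
    rw [← hqab]; exact sub_ne_zero.mpr (Ne.symm hab)
  have hkey : lam' * (1 - q ^ (a:ℂ) * w) = (1 - w) * q := by
    rw [hlam'q, hlam, hqa1, hqab, div_mul_eq_mul_div, div_mul_cancel₀ _ h1qaw,
      mul_comm (q ^ a) q, ← mul_assoc, mul_inv_cancel_right₀ hqane]
  have hlameq : lam = lam' * q ^ (a:ℂ) := by
    rw [hlam'q, inv_mul_cancel_right₀ hqane]
  have hAlam : A * lam = lam' * q := by
    rw [hA, hlam'q]
    ring
  have h1q : (1:ℂ) - q ≠ 0 := by
    have h := yg_one_sub_ne hqn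
    simpa using h
  clear_value A w lam'
  rw [hqb1, hqb2]
  by_cases hw1 : w = 1
  · -- degenerate case : lam = 0
    have hlam0 : lam = 0 := by
      rw [hw1] at hlam
      simpa using hlam
    have hL : (∑' n : ℕ, qPoch A q n * qPoch w q n /
        (qPoch q q n * qPoch (w * q ^ (2:ℕ)) q n) * lam ^ n) = 1 := by
      rw [tsum_eq_single 0]
      · simp [qPoch]
      · intro n hn
        rw [hlam0, zero_pow hn, mul_zero]
    rw [hL, hlam'def, hlam0, hw1]
    have h2 : qPochInf ((0:ℂ) * q ^ (-a)) q = 1 := by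
      simp [qPochInf]
    have h3 : qPochInf (0:ℂ) q = 1 := by
      simp [qPochInf]
    rw [h2, h3]
    field_simp
  · -- main case
    have hw0 : (1:ℂ) - w ≠ 0 := sub_ne_zero.mpr (Ne.symm hw1)
    have hP0 : ∀ n : ℕ, (1:ℂ) - w * q ^ n ≠ 0 := by
      intro n
      cases n with
      | zero => simpa using hw0
      | succ k => exact hP k
    have hQ2 : ∀ n : ℕ, qPoch (w * q ^ (2:ℕ)) q n ≠ 0 := by
      intro n
      rw [qPoch]
      apply Finset.prod_ne_zero_iff.mpr
      intro k _
      have hk : (1:ℂ) - w * q ^ (2:ℕ) * q ^ k = 1 - w * q ^ (k+1+1) := by ring_nf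
      rw [hk]
      exact hP (k+1)
    have hlamq : ‖lam * q‖ < 1 := by
      rw [norm_mul]
      nlinarith [norm_nonneg lam, norm_nonneg q]
    have SE0 : Summable (fun n => cseq A q n * lam ^ n * (1 - w * q ^ n)⁻¹) :=
      yg_summable_P0 hqn A hlamn hP0
    have SE1 : Summable (fun n => cseq A q n * lam ^ n * (1 - w * q ^ (n+1))⁻¹) :=
      yg_summable_P1 hqn A hlamn hP
    have SF0 : Summable (fun n => cseq A q n * (lam * q) ^ n * (1 - w * q ^ n)⁻¹) :=
      yg_summable_P0 hqn A hlamq hP0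
    have SF1 : Summable (fun n => cseq A q n * (lam * q) ^ n * (1 - w * q ^ (n+1))⁻¹) :=
      yg_summable_P1 hqn A hlamq hP
    have Sf : Summable (fun n => cseq A q n * lam ^ n) := yg_summable' hqn A hlamn
    set E0 := ∑' n, cseq A q n * lam ^ n * (1 - w * q ^ n)⁻¹ with hE0def
    set E1 := ∑' n, cseq A q n * lam ^ n * (1 - w * q ^ (n+1))⁻¹ with hE1def
    set F0 := ∑' n, cseq A q n * (lam * q) ^ n * (1 - w * q ^ n)⁻¹ with hF0def
    set F1 := ∑' n, cseq A q n * (lam * q) ^ n * (1 - w * q ^ (n+1))⁻¹ with hF1def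
    set f := ∑' n, cseq A q n * lam ^ n with hfdef
    have idA : E0 - w * F0 = f := by
      rw [hE0def, hF0def, ← tsum_mul_left (a := w), ← Summable.tsum_sub SE0 (SF0.mul_left w), hfdef]
      apply tsum_congr
      intro n
      rw [mul_pow]
      field_simp [hP0 n]
    have idA' : E1 - (w * q) * F1 = f := by
      rw [hE1def, hF1def, ← tsum_mul_left (a := w * q),
        ← Summable.tsum_sub SE1 (SF1.mul_left (w*q)), hfdef]
      apply tsum_congr
      intro n
      rw [mul_pow]
      field_simp [hP (n)]
      ring
    have Sg : Summable (fun n => cseq A q n * lam ^ n * (1 - q ^ n) * (1 - w * q ^ n)⁻¹) := by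
      apply (SE0.sub SF0).congr
      intro n
      rw [mul_pow]
      ring
    have idB : E0 - F0 = lam * E1 - (lam' * q) * F1 := by
      have step1 : E0 - F0 = ∑' n, cseq A q n * lam ^ n * (1 - q ^ n) * (1 - w * q ^ n)⁻¹ := by
        rw [hE0def, hF0def, ← Summable.tsum_sub SE0 SF0]
        apply tsum_congr
        intro n
        rw [mul_pow]
        ring
      have step2 : (∑' n, cseq A q n * lam ^ n * (1 - q ^ n) * (1 - w * q ^ n)⁻¹)
          = ∑' n, (lam * (cseq A q n * lam ^ n * (1 - w * q ^ (n+1))⁻¹)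
              - (lam' * q) * (cseq A q n * (lam * q) ^ n * (1 - w * q ^ (n+1))⁻¹)) := by
        rw [Summable.tsum_eq_zero_add Sg]
        simp only [pow_zero, sub_self, mul_zero, zero_mul, zero_add]
        apply tsum_congr
        intro n
        have hD : (1:ℂ) - q ^ (n+1) ≠ 0 := yg_one_sub_ne (yg_pow_lt_one hqn n)
        have hcs : cseq A q (n+1) * (1 - q ^ (n+1)) = cseq A q n * (1 - A * q ^ n) := by
          rw [cseq_succ hqn A n]
          field_simp
        have expand : cseq A q (n+1) * lam ^ (n+1) * (1 - q ^ (n+1)) * (1 - w * q ^ (n+1))⁻¹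
            = (cseq A q n * (1 - A * q ^ n)) * lam ^ (n+1) * (1 - w * q ^ (n+1))⁻¹ := by
          rw [← hcs]; ring
        rw [expand, mul_pow]
        linear_combination (-(cseq A q n * (1 - w * q ^ (n+1))⁻¹ * lam ^ n * q ^ n)) * hAlam
      have step3 : (∑' n, (lam * (cseq A q n * lam ^ n * (1 - w * q ^ (n+1))⁻¹)
              - (lam' * q) * (cseq A q n * (lam * q) ^ n * (1 - w * q ^ (n+1))⁻¹)))
          = lam * E1 - (lam' * q) * F1 := by
        rw [Summable.tsum_sub (SE1.mul_left lam) (SF1.mul_left (lam' * q)),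
          tsum_mul_left, tsum_mul_left, hE1def, hF1def]
      rw [step1, step2, step3]
    have main : (1 - w) * E0 - (1 - w) * q * E1 = (1 - lam') * f := by
      linear_combination idA - lam' * idA' - w * idB + E1 * hkey - w * E1 * hlameq
    have hqprod : ∀ n : ℕ, qPoch w q n * ((1 - w * q ^ n) * (1 - w * q ^ (n+1)))
        = qPoch (w * q ^ (2:ℕ)) q n * ((1 - w) * (1 - w * q)) := by
      intro n
      induction n with
      | zero => simp [qPoch]
      | succ m IH =>
        rw [qPoch_succ, qPoch_succ]
        linear_combination (1 - w * q ^ (m+2)) * IH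
    have hterm : ∀ n : ℕ, qPoch A q n * qPoch w q n /
        (qPoch q q n * qPoch (w * q ^ (2:ℕ)) q n) * lam ^ n
        = ((1 - w * q) / (1 - q)) * ((1 - w) * (cseq A q n * lam ^ n * (1 - w * q ^ n)⁻¹)
            - ((1 - w) * q) * (cseq A q n * lam ^ n * (1 - w * q ^ (n+1))⁻¹)) := by
      intro n
      have e0c : ((1:ℂ) - w * q ^ n)⁻¹ * (1 - w * q ^ n) = 1 := inv_mul_cancel₀ (hP0 n)
      have e1c : ((1:ℂ) - w * q ^ (n+1))⁻¹ * (1 - w * q ^ (n+1)) = 1 := inv_mul_cancel₀ (hP n)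
      have hinv : ((1:ℂ) - w * q ^ n)⁻¹ - q * (1 - w * q ^ (n+1))⁻¹
          = (1 - q) * (((1:ℂ) - w * q ^ n)⁻¹ * (1 - w * q ^ (n+1))⁻¹) := by
        linear_combination (q * ((1:ℂ) - w * q ^ (n+1))⁻¹) * e0c
          - (((1:ℂ) - w * q ^ n)⁻¹) * e1c
      have hfrac : qPoch w q n / qPoch (w * q ^ (2:ℕ)) q n
          = (1 - w) * (1 - w * q) * (((1:ℂ) - w * q ^ n)⁻¹ * (1 - w * q ^ (n+1))⁻¹) := by
        rw [div_eq_iff (hQ2 n)]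
        linear_combination (((1:ℂ) - w * q ^ n)⁻¹ * (1 - w * q ^ (n+1))⁻¹) * hqprod n
          - (qPoch w q n * ((1:ℂ) - w * q ^ (n+1))⁻¹ * (1 - w * q ^ (n+1))) * e0c
          - qPoch w q n * e1c
      have hC : (1 - w * q) / (1 - q) * (1 - q) = 1 - w * q := div_mul_cancel₀ _ h1q
      calc qPoch A q n * qPoch w q n / (qPoch q q n * qPoch (w * q ^ (2:ℕ)) q n) * lam ^ n
          = (cseq A q n * lam ^ n) * (qPoch w q n / qPoch (w * q ^ (2:ℕ)) q n) := by
            rw [cseq]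
            field_simp [yg_qPoch_q_ne_zero hqn n, hQ2 n]
        _ = (cseq A q n * lam ^ n) * ((1 - w) * (1 - w * q)
              * (((1:ℂ) - w * q ^ n)⁻¹ * (1 - w * q ^ (n+1))⁻¹)) := by rw [hfrac]
        _ = ((1 - w * q) / (1 - q)) * ((1 - w) * (cseq A q n * lam ^ n * (1 - w * q ^ n)⁻¹)
            - ((1 - w) * q) * (cseq A q n * lam ^ n * (1 - w * q ^ (n+1))⁻¹)) := by
            linear_combination (-(cseq A q n * lam ^ n * (1 - w)
                * (((1:ℂ) - w * q ^ n)⁻¹ * (1 - w * q ^ (n+1))⁻¹))) * hC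
              - (((1 - w * q) / (1 - q)) * (1 - w) * cseq A q n * lam ^ n) * hinv
    have hS : (∑' n : ℕ, qPoch A q n * qPoch w q n /
        (qPoch q q n * qPoch (w * q ^ (2:ℕ)) q n) * lam ^ n)
        = ((1 - w * q) / (1 - q)) * ((1 - w) * E0 - (1 - w) * q * E1) := by
      rw [tsum_congr hterm, tsum_mul_left]
      congr 1
      rw [Summable.tsum_sub (SE0.mul_left (1-w)) (SE1.mul_left ((1-w)*q)),
        tsum_mul_left, tsum_mul_left, hE0def, hE1def]
    rw [hS, main]
    -- now the right-hand side
    have hqbin := yg_qbinomial hqn A hlamn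
    have hAl : ∀ k : ℕ, (1:ℂ) - A * lam * q ^ k = 1 - (lam' * q) * q ^ k :=
      fun k => by rw [hAlam]
    rw [tprod_congr hAl] at hqbin
    have hqbin' : f * qPochInf lam q = qPochInf (lam' * q) q := by
      rw [qPochInf, qPochInf, ← hfdef] at *
      exact hqbin
    have hpeel : qPochInf lam' q = (1 - lam') * qPochInf (lam' * q) q := by
      rw [qPochInf, qPochInf]
      have hmult : Multipliable (fun n : ℕ => (1:ℂ) - lam' * q ^ (n+1)) := by
        apply (yg_multipliable (lam' * q) q hqn).congr
        intro n
        ring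
      rw [tprod_eq_zero_mul' hmult]
      congr 1
      · simp
      · exact tprod_congr (fun n => by ring)
    have hne : qPochInf lam q ≠ 0 := by
      rw [qPochInf]
      apply yg_tprod_ne_zero lam q hqn
      intro k
      apply yg_one_sub_ne
      rw [norm_mul, norm_pow]
      nlinarith [norm_nonneg lam, pow_nonneg (norm_nonneg q) k,
        pow_le_one₀ (norm_nonneg q) hqn.le (n := k)]
    rw [hpeel, ← hqbin', mul_div_assoc, mul_div_assoc, div_self hne, mul_one]
end

section
/- Let 0 < q < 1 and let a, b be real numbers with b ≠ 0, a + b ≠ 0, |b/(a+b)| < 1, q^a ≠ 1, a q^a ≠ b(1 - q^a), a + b ≠ b q^{-a}, and such that p(n) := (b q^{a+n} + a q^{a+n} - a q^a - b q^n)(b q^{a+n+1} + a q^{a+n+1} - a q^a - b q^{n+1}) is nonzero for all integers n ≥ 0. Then (a+b)(1-q)^2 q^{2a-1} ∑_{n=0}^∞ [(q^{1-a};q)_n / (q;q)_n] (bq/(a+b))^n / p(n) equals (a+b)(1-q) q^{2a-1} / [b (1-q^a)(a q^a - b(1-q^a))] − [1 / (q (a + b - b q^{-a}))] · ∑_{n=0}^∞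 [(q^{1-a};q)_n (q;q)_n / ((q;q)_n (q^2;q)_n)] (b/(a+b))^n. -/
/-- The finite `q`-shifted factorial `(a;q)_n = ∏_{k=0}^{n-1} (1 - a q^k)` over `ℝ`. -/
noncomputable def qPochR (a q : ℝ) (n : ℕ) : ℝ :=
  ∏ k ∈ Finset.range n, (1 - a * q ^ k)

open Filter Topology

lemma qPochR_succ (a q : ℝ) (n : ℕ) :
    qPochR a q (n + 1) = qPochR a q n * (1 - a * q ^ n) :=
  Finset.prod_range_succ _ _

lemma qPochR_pos {s q : ℝ} (hq0 : 0 < q) (hq1 : q < 1) (hs0 : 0 < s) (hs1 : s < 1) (n : ℕ) :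
    0 < qPochR s q n := by
  refine Finset.prod_pos fun k _ => ?_
  have h1 : q ^ k ≤ 1 := pow_le_one₀ hq0.le hq1.le
  have h2 : 0 < q ^ k := pow_pos hq0 k
  nlinarith

lemma qPochR_sq (q : ℝ) (hq0 : 0 < q) (hq1 : q < 1) (n : ℕ) :
    (1 - q) * qPochR (q ^ 2) q n = qPochR q q (n + 1) := by
  induction n with
  | zero => simp [qPochR]
  | succ m ih =>
    rw [qPochR_succ (q ^ 2) q m, qPochR_succ q q (m + 1), ← ih]
    ring

lemma aux_summable {q s y : ℝ} (t : ℝ) (hq0 : 0 < q) (hq1 : q < 1) (hs0 : 0 < s)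
    (hs1 : s < 1) (hy : |y| < 1) :
    Summable (fun n => qPochR t q n / qPochR s q n * y ^ n) := by
  by_cases hz : ∃ k, 1 - t * q ^ k = 0
  · obtain ⟨k, hk⟩ := hz
    apply summable_of_ne_finset_zero (s := Finset.range (k + 1))
    intro n hn
    have hkn : k ∈ Finset.range n := by
      simp only [Finset.mem_range] at hn ⊢; omega
    have : qPochR t q n = 0 := Finset.prod_eq_zero hkn hk
    simp [this]
  · push_neg at hz
    by_cases hy0 : y = 0
    · apply summable_of_ne_finset_zero (s := Finset.range 1)
      intro n hn
      have : n ≠ 0 := by simpa [Finset.mem_range, Nat.lt_one_iff] using hn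
      simp [hy0, zero_pow this]
    · have hne : ∀ n, qPochR t q n / qPochR s q n * y ^ n ≠ 0 := fun n => by
        have h1 : qPochR t q n ≠ 0 := Finset.prod_ne_zero_iff.2 fun k _ => hz k
        have h2 : (qPochR s q n) ≠ 0 := (qPochR_pos hq0 hq1 hs0 hs1 n).ne'
        exact mul_ne_zero (div_ne_zero h1 h2) (pow_ne_zero n hy0)
      apply summable_of_ratio_test_tendsto_lt_one hy (Eventually.of_forall hne)
      have hpow : Tendsto (fun n : ℕ => q ^ n) atTop (𝓝 0) :=
        tendsto_pow_atTop_nhds_zero_of_lt_one hq0.le hq1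
      have h1 : Tendsto (fun n : ℕ => |1 - t * q ^ n| / |1 - s * q ^ n| * |y|) atTop
          (𝓝 (|y|)) := by
        have ha : Tendsto (fun n : ℕ => |1 - t * q ^ n|) atTop (𝓝 1) := by
          have := ((tendsto_const_nhds (x := (1:ℝ))).sub (hpow.const_mul t)).abs
          simpa using this
        have hb : Tendsto (fun n : ℕ => |1 - s * q ^ n|) atTop (𝓝 1) := by
          have := ((tendsto_const_nhds (x := (1:ℝ))).sub (hpow.const_mul s)).abs
          simpa using this
        have := (ha.div hb one_ne_zero).mul_const |y|
        simpa using this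
      refine h1.congr fun n => ?_
      have h2 : (qPochR s q n) ≠ 0 := (qPochR_pos hq0 hq1 hs0 hs1 n).ne'
      have h2' : (1 - s * q ^ n) ≠ 0 := by
        have := qPochR_pos hq0 hq1 hs0 hs1 (n + 1)
        rw [qPochR_succ] at this
        intro h; rw [h] at this; simpa using this
      have e : qPochR t q (n+1) / qPochR s q (n+1) * y ^ (n+1)
          = (qPochR t q n / qPochR s q n * y ^ n) * ((1 - t * q ^ n) / (1 - s * q ^ n) * y) := by
        rw [qPochR_succ, qPochR_succ, pow_succ]
        field_simp
      have habs : |qPochR t q n / qPochR s q n * y ^ n| ≠ 0 := by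
        simpa [abs_eq_zero] using hne n
      rw [Real.norm_eq_abs, Real.norm_eq_abs, e, abs_mul,
        mul_comm (|qPochR t q n / qPochR s q n * y ^ n|),
        mul_div_assoc, div_self habs, mul_one, abs_mul, abs_div]

set_option maxHeartbeats 1600000 in
/-- The new `q`-analogue of Gosper's strange series evaluation (Theorem 2 of the paper). -/
theorem new_q_gosper (q a b : ℝ) (hq0 : 0 < q) (hq1 : q < 1)
    (hb : b ≠ 0) (hab : a + b ≠ 0) (hx : |b / (a + b)| < 1)
    (hqa : q ^ a ≠ 1) (haqa : a * q ^ a ≠ b * (1 - q ^ a))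
    (habq : a + b ≠ b * q ^ (-a))
    (p : ℕ → ℝ)
    (hp : ∀ n : ℕ, p n =
      (b * q ^ (a + n) + a * q ^ (a + n) - a * q ^ a - b * q ^ (n : ℝ)) *
      (b * q ^ (a + n + 1) + a * q ^ (a + n + 1) - a * q ^ a - b * q ^ ((n : ℝ) + 1)))
    (hpne : ∀ n : ℕ, p n ≠ 0) :
    (a + b) * (1 - q) ^ 2 * q ^ (2 * a - 1) *
        ∑' n : ℕ, (qPochR (q ^ (1 - a)) q n / qPochR q q n) * (b * q / (a + b)) ^ n / p n
      = (a + b) * (1 - q) * q ^ (2 * a - 1) /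
          (b * (1 - q ^ a) * (a * q ^ a - b * (1 - q ^ a)))
        - (1 / (q * (a + b - b * q ^ (-a)))) *
            ∑' n : ℕ, qPochR (q ^ (1 - a)) q n * qPochR q q n /
              (qPochR q q n * qPochR (q ^ 2) q n) * (b / (a + b)) ^ n := by
  have hqne : q ≠ 0 := hq0.ne'
  have h1q : (0:ℝ) < 1 - q := by linarith
  have hQpos : (0:ℝ) < q ^ a := Real.rpow_pos_of_pos hq0 a
  set Q : ℝ := q ^ a with hQdef
  set t : ℝ := q ^ (1 - a) with htdef
  set x : ℝ := b / (a + b) with hxdef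
  clear_value Q t x
  have ha : a ≠ 0 := by
    intro h
    exact hqa (by rw [hQdef, h, Real.rpow_zero])
  have hqinv : q ^ (-a) = Q⁻¹ := by
    rw [hQdef, ← Real.rpow_neg hq0.le]
  have htq : t = q / Q := by
    rw [htdef, hQdef, Real.rpow_sub hq0, Real.rpow_one]
  have hQ1 : Q - 1 ≠ 0 := sub_ne_zero.2 hqa
  have hQ1' : (1:ℝ) - Q ≠ 0 := sub_ne_zero.2 (Ne.symm hqa)
  have habq' : a + b - b * Q⁻¹ ≠ 0 := by
    rw [← hqinv]; exact sub_ne_zero.2 habq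
  have hQne : Q ≠ 0 := hQpos.ne'
  have hD : (a + b) * Q - b ≠ 0 := by
    intro h
    apply habq'
    have h2 : (a + b) * Q = b := by linarith
    field_simp
    linarith [h2]
  have hq1' : q - 1 ≠ 0 := by linarith
  have h1q' : (1:ℝ) - q ≠ 0 := by linarith
  set F : ℕ → ℝ := fun n => (a + b) * Q * q ^ n - a * Q - b * q ^ n with hFdef
  clear_value F
  have hfp : ∀ n : ℕ, p n = F n * F (n + 1) := by
    intro n
    rw [hp n]
    have e1 : q ^ (a + (n:ℝ)) = Q * q ^ n := by
      rw [Real.rpow_add hq0, Real.rpow_natCast, hQdef]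
    have e2 : q ^ (a + (n:ℝ) + 1) = Q * q ^ n * q := by
      rw [Real.rpow_add hq0, Real.rpow_one, e1]
    have e3 : q ^ ((n:ℝ)) = q ^ n := Real.rpow_natCast q n
    have e4 : q ^ ((n:ℝ) + 1) = q ^ n * q := by
      rw [Real.rpow_add hq0, Real.rpow_one, e3]
    rw [e1, e2, e3, e4, hFdef]
    simp only [pow_succ]
    ring
  have hF : ∀ n, F n ≠ 0 := by
    intro n h
    exact hpne n (by rw [hfp n, h, zero_mul])
  have hpow : Tendsto (fun n : ℕ => q ^ n) atTop (𝓝 0) :=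
    tendsto_pow_atTop_nhds_zero_of_lt_one hq0.le hq1
  have hFlim : Tendsto F atTop (𝓝 (-(a * Q))) := by
    have h := (hpow.const_mul ((a + b) * Q - b)).sub_const (a * Q)
    rw [mul_zero, zero_sub] at h
    exact h.congr fun n => by rw [hFdef]; ring
  have hP2pos : ∀ n, 0 < qPochR q q n := qPochR_pos hq0 hq1 hq0 hq1
  have hq2pos : (0:ℝ) < q ^ 2 := pow_pos hq0 2
  have hq21 : q ^ 2 < 1 := by nlinarith
  have hP3pos : ∀ n, 0 < qPochR (q ^ 2) q n := qPochR_pos hq0 hq1 hq2pos hq21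
  have h1qq : ∀ n : ℕ, (0:ℝ) < 1 - q * q ^ n := by
    intro n
    have h1 : q ^ n ≤ 1 := pow_le_one₀ hq0.le hq1.le
    have h2 : 0 < q ^ n := pow_pos hq0 n
    nlinarith
  set c : ℕ → ℝ := fun n => qPochR t q n / qPochR q q n with hcdef
  set g : ℕ → ℝ := fun n => c n * x ^ n / F n with hgdef
  set A : ℝ := ((q - 1) * ((a + b) * Q - b))⁻¹ with hAdef
  set B : ℝ := A * (Q⁻¹ / ((a + b) * (1 - q))) with hBdef
  clear_value c g A B
  have hAne : A ≠ 0 := by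
    rw [hAdef]
    exact inv_ne_zero (mul_ne_zero hq1' hD)
  set L : ℕ → ℝ :=
    fun n => qPochR t q n / qPochR q q n * (b * q / (a + b)) ^ n / p n with hLdef
  set W : ℕ → ℝ :=
    fun n => qPochR t q n * qPochR q q n / (qPochR q q n * qPochR (q ^ 2) q n) * x ^ n
    with hWdef
  clear_value L W
  -- key pointwise identity
  have hkey : ∀ n : ℕ, L n = A * (g n - g (n + 1)) + B * W n := by
    intro n
    have hP2 : qPochR q q n ≠ 0 := (hP2pos n).ne'
    have hP3 : qPochR (q ^ 2) q n ≠ 0 := (hP3pos n).ne'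
    have h1 : (1:ℝ) - q * q ^ n ≠ 0 := (h1qq n).ne'
    have hfn : (a + b) * Q * q ^ n - a * Q - b * q ^ n ≠ 0 := by
      have h := hF n
      rw [hFdef] at h
      exact h
    have hfn1 : (a + b) * Q * (q ^ n * q) - a * Q - b * (q ^ n * q) ≠ 0 := by
      have h := hF (n + 1)
      have e : F (n + 1) = (a + b) * Q * (q ^ n * q) - a * Q - b * (q ^ n * q) := by
        rw [hFdef]; simp only [pow_succ]
      rwa [e] at h
    have e3 : qPochR (q ^ 2) q n = qPochR q q n * (1 - q * q ^ n) / (1 - q) := by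
      have hsq := qPochR_sq q hq0 hq1 n
      rw [qPochR_succ] at hsq
      rw [eq_div_iff (by linarith : (1:ℝ) - q ≠ 0)]
      linear_combination hsq
    have hbq : b * q / (a + b) = x * q := by rw [hxdef]; ring
    rw [hLdef, hWdef, hgdef, hcdef]
    simp only
    rw [hfp n, hbq, e3, qPochR_succ t q n, qPochR_succ q q n, htq, hFdef]
    simp only [pow_succ, mul_pow]
    rw [hAdef, hBdef, hAdef, hxdef]
    generalize hE : q ^ n = E at h1 hfn hfn1 ⊢
    generalize hX : (b / (a + b) : ℝ) ^ n = X
    generalize hP1 : qPochR t q n = P1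
    generalize hP2g : qPochR q q n = P2 at hP2 ⊢
    field_simp
    have hfn' : Q * (E * (a + b) - a) - E * b ≠ 0 := by
      intro h; apply hfn; linear_combination h
    have hfn1' : Q * (q * E * (a + b) - a) - q * E * b ≠ 0 := by
      intro h; apply hfn1; linear_combination h
    have hD' : Q * (a + b) - b ≠ 0 := by
      intro h; apply hD; linear_combination h
    field_simp
    ring
  -- summability of W
  have hWs : Summable W := by
    refine (aux_summable t hq0 hq1 hq2pos hq21 hx).congr fun n => ?_
    rw [hWdef]
    simp only
    rw [mul_comm (qPochR t q n) (qPochR q q n),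
      mul_div_mul_left _ _ (hP2pos n).ne']
  have hxq : |x * q| < 1 := by
    rw [abs_mul, abs_of_pos hq0]
    have h0 : 0 ≤ |x| := abs_nonneg x
    nlinarith
  have hs1 : Summable (fun n => c n * (x * q) ^ n) :=
    (aux_summable t hq0 hq1 hq0 hq1 hxq).congr fun n => by rw [hcdef]
  have hc0 : Tendsto (fun n => c n * x ^ n) atTop (𝓝 0) := by
    have := (aux_summable t hq0 hq1 hq0 hq1 hx).tendsto_atTop_zero
    exact this.congr fun n => by rw [hcdef]
  have hg0 : Tendsto g atTop (𝓝 0) := by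
    have hne : -(a * Q) ≠ 0 := neg_ne_zero.2 (mul_ne_zero ha hQne)
    have hFinv : Tendsto (fun n => (F n)⁻¹) atTop (𝓝 (-(a * Q))⁻¹) := hFlim.inv₀ hne
    have h := hc0.mul hFinv
    rw [zero_mul] at h
    exact h.congr fun n => by rw [hgdef]; simp only [div_eq_mul_inv]
  -- summability of L
  have hLeq : ∀ n, L n = (c n * (x * q) ^ n) * (F n * F (n + 1))⁻¹ := by
    intro n
    rw [hLdef, hcdef]
    simp only
    rw [hfp n, show b * q / (a + b) = x * q from by rw [hxdef]; ring, div_eq_mul_inv]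
  have hFFlim : Tendsto (fun n => (F n * F (n + 1))⁻¹) atTop
      (𝓝 ((-(a * Q) * -(a * Q))⁻¹)) := by
    have h2 : Tendsto (fun n => F (n + 1)) atTop (𝓝 (-(a * Q))) :=
      hFlim.comp (tendsto_add_atTop_nat 1)
    exact (hFlim.mul h2).inv₀ (by
      have : a * Q ≠ 0 := mul_ne_zero ha hQne
      simp [this])
  have hbd : ∀ᶠ n in atTop, |(F n * F (n + 1))⁻¹| ≤ |(-(a * Q) * -(a * Q))⁻¹| + 1 :=
    Filter.Tendsto.eventually_le_const (lt_add_one _) hFFlim.abs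
  have hLs : Summable L := by
    refine Summable.of_norm_bounded_eventually_nat
      (g := fun n => (|(-(a * Q) * -(a * Q))⁻¹| + 1) * |c n * (x * q) ^ n|)
      (hs1.abs.mul_left _) ?_
    filter_upwards [hbd] with n hn
    rw [hLeq n, Real.norm_eq_abs, abs_mul, mul_comm]
    exact mul_le_mul_of_nonneg_right hn (abs_nonneg _)
  -- telescoping
  have hTel : Summable (fun n => g n - g (n + 1)) := by
    have he : (fun n => g n - g (n + 1)) = fun n => A⁻¹ * (L n - B * W n) := by
      funext n
      rw [hkey n]
      field_simp
      ring
    rw [he]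
    exact ((hLs.sub (hWs.mul_left B)).mul_left A⁻¹)
  have htelval : ∑' n, (g n - g (n + 1)) = g 0 := by
    have h1 := hTel.hasSum.tendsto_sum_nat
    have h2 : Tendsto (fun n => ∑ i ∈ Finset.range n, (g i - g (i + 1))) atTop (𝓝 (g 0)) := by
      have he : (fun n => ∑ i ∈ Finset.range n, (g i - g (i + 1))) = fun n => g 0 - g n :=
        funext fun n => Finset.sum_range_sub' g n
      rw [he]
      simpa using tendsto_const_nhds.sub hg0
    exact tendsto_nhds_unique h1 h2
  have htsum : ∑' n, L n = A * g 0 + B * ∑' n, W n := by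
    calc ∑' n, L n = ∑' n, (A * (g n - g (n + 1)) + B * W n) := tsum_congr hkey
      _ = (∑' n, A * (g n - g (n + 1))) + ∑' n, B * W n :=
          Summable.tsum_add (hTel.mul_left A) (hWs.mul_left B)
      _ = A * (∑' n, (g n - g (n + 1))) + B * ∑' n, W n := by rw [tsum_mul_left, tsum_mul_left]
      _ = A * g 0 + B * ∑' n, W n := by rw [htelval]
  have hg0val : g 0 = (b * (Q - 1))⁻¹ := by
    rw [hgdef, hcdef, hFdef]
    simp [qPochR]
    rw [← mul_inv]
    congr 1
    ring
  have hq2a : q ^ (2 * a - 1) = Q * Q / q := by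
    rw [show (2 : ℝ) * a - 1 = a + a + (-1) by ring, Real.rpow_add hq0, Real.rpow_add hq0,
      Real.rpow_neg_one, hQdef]
    ring
  have hD2 : a * Q - b * (1 - Q) ≠ 0 := by
    have he : a * Q - b * (1 - Q) = (a + b) * Q - b := by ring
    rw [he]; exact hD
  rw [htsum, hg0val, hq2a, hqinv, hBdef, hAdef]
  field_simp
  ring
end

section
/- Let a and b be positive real numbers. Then ∑_{n=0}^∞ [(1−a)_n (b)_n / ((b+2)_n n!)] (b/(a+b))^n = (b+1) (a/(a+b))^a, where (x)_n = x(x+1)⋯(x+n−1) denotes the shifted factorial with (x)_0 = 1, and (a/(a+b))^a denotes the positive real power. -/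
open Polynomial Finset

lemma gosper_asc_eval_prod (c : ℝ) (n : ℕ) :
    (ascPochhammer ℝ n).eval c = ∏ i ∈ Finset.range n, (c + i) := by
  induction n with
  | zero => simp
  | succ n ih => rw [ascPochhammer_succ_right, Finset.prod_range_succ, ← ih]; simp

lemma gosper_asc_abs_le (c : ℝ) (n : ℕ) :
    |(ascPochhammer ℝ n).eval c| ≤ (ascPochhammer ℝ n).eval |c| := by
  rw [gosper_asc_eval_prod, gosper_asc_eval_prod, Finset.abs_prod]
  refine Finset.prod_le_prod (fun i _ => abs_nonneg _) (fun i _ => ?_)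
  calc |c + (i:ℝ)| ≤ |c| + |(i:ℝ)| := abs_add_le _ _
    _ = |c| + i := by rw [Nat.abs_cast]

lemma gosper_asc_mono {u v : ℝ} (h0 : 0 ≤ u) (h : u ≤ v) (n : ℕ) :
    (ascPochhammer ℝ n).eval u ≤ (ascPochhammer ℝ n).eval v := by
  rw [gosper_asc_eval_prod, gosper_asc_eval_prod]
  refine Finset.prod_le_prod (fun i _ => by positivity) (fun i _ => by linarith)

lemma gosper_asc_nat (m n : ℕ) :
    (ascPochhammer ℝ n).eval (m : ℝ) = (m.ascFactorial n : ℝ) := by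
  rw [← ascPochhammer_eval_cast, ascPochhammer_nat_eq_ascFactorial]

lemma gosper_growth (c : ℝ) : ∃ m : ℕ, 0 < m ∧ ∀ n : ℕ,
    |(ascPochhammer ℝ n).eval c| ≤ (m:ℝ)^m * (n+1)^m * n.factorial := by
  refine ⟨⌈|c|⌉₊ + 1, Nat.succ_pos _, fun n => ?_⟩
  set m : ℕ := ⌈|c|⌉₊ + 1 with hm
  have hcm : |c| ≤ (m : ℝ) := le_trans (Nat.le_ceil _) (by exact_mod_cast Nat.le_succ _)
  have h1 : |(ascPochhammer ℝ n).eval c| ≤ (m.ascFactorial n : ℝ) := by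
    calc |(ascPochhammer ℝ n).eval c| ≤ (ascPochhammer ℝ n).eval |c| := gosper_asc_abs_le c n
      _ ≤ (ascPochhammer ℝ n).eval (m:ℝ) := gosper_asc_mono (abs_nonneg _) hcm n
      _ = _ := gosper_asc_nat m n
  have h2 : m.ascFactorial n ≤ m^m * (n+1)^m * n.factorial := by
    have hch : m.ascFactorial n = n.factorial * (m + n - 1).choose n :=
      Nat.ascFactorial_eq_factorial_mul_choose' m n
    have hsymm : (m + n - 1).choose n ≤ (m + n - 1)^(m-1) := by
      have h1 : n ≤ m + n - 1 := by omega
      have : (m + n - 1).choose (m + n - 1 - n) = (m + n - 1).choose n := Nat.choose_symm h1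
      have h2 : m + n - 1 - n = m - 1 := by omega
      rw [h2] at this
      rw [← this]
      exact Nat.choose_le_pow _ _
    have hm1 : 1 ≤ m := Nat.succ_le_succ (Nat.zero_le _)
    have hb : (m + n - 1)^(m-1) ≤ (m * (n+1))^(m-1) := by
      apply Nat.pow_le_pow_left
      have : m * (n+1) = m + m * n := by ring
      rw [this]
      have : 1 * n ≤ m * n := Nat.mul_le_mul_right n hm1
      omega
    have hb2 : (m * (n+1))^(m-1) ≤ m^m * (n+1)^m := by
      rw [Nat.mul_pow]
      exact Nat.mul_le_mul (Nat.pow_le_pow_right (by omega) (by omega))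
        (Nat.pow_le_pow_right (by omega) (by omega))
    calc m.ascFactorial n = n.factorial * (m + n - 1).choose n := hch
      _ ≤ n.factorial * (m^m * (n+1)^m) := Nat.mul_le_mul_left _ (le_trans hsymm (le_trans hb hb2))
      _ = m^m * (n+1)^m * n.factorial := by ring
  calc |(ascPochhammer ℝ n).eval c| ≤ (m.ascFactorial n : ℝ) := h1
    _ ≤ ((m^m * (n+1)^m * n.factorial : ℕ) : ℝ) := by exact_mod_cast h2
    _ = (m:ℝ)^m * (n+1)^m * n.factorial := by push_cast; ring

lemma gosper_summable_aux (k : ℕ) {s : ℝ} (hs0 : 0 ≤ s) (hs : s < 1) :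
    Summable (fun n : ℕ => ((n:ℝ)+1)^k * s ^ n) := by
  have hsum : Summable (fun n : ℕ => (2:ℝ)^k * ((n:ℝ)^k * s^n) + (2:ℝ)^k * s^n) := by
    apply Summable.add
    · exact (summable_pow_mul_geometric_of_norm_lt_one (R := ℝ) k (by rwa [Real.norm_eq_abs, abs_of_nonneg hs0])).mul_left _
    · exact (summable_geometric_of_lt_one hs0 hs).mul_left _
  refine hsum.of_nonneg_of_le (fun n => by positivity) (fun n => ?_)
  have hsn : (0:ℝ) ≤ s ^ n := by positivity
  have h : ((n:ℝ)+1)^k ≤ (2:ℝ)^k * (n:ℝ)^k + (2:ℝ)^k := by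
    rcases Nat.eq_zero_or_pos n with h0 | h1
    · subst h0
      have h2k : (1:ℝ) ≤ 2^k := one_le_pow₀ (by norm_num)
      have : (0:ℝ) ≤ (2:ℝ)^k * (0:ℝ)^k := by positivity
      norm_num
      nlinarith
    · have h2 : ((n:ℝ)+1) ≤ 2*(n:ℝ) := by
        have : (1:ℝ) ≤ (n:ℝ) := by exact_mod_cast h1
        linarith
      calc ((n:ℝ)+1)^k ≤ (2*(n:ℝ))^k := by
            apply pow_le_pow_left₀ (by positivity) h2
        _ = (2:ℝ)^k * (n:ℝ)^k := mul_pow 2 _ k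
        _ ≤ _ := le_add_of_nonneg_right (by positivity)
  calc ((n:ℝ)+1)^k * s^n ≤ ((2:ℝ)^k * (n:ℝ)^k + (2:ℝ)^k) * s^n :=
        mul_le_mul_of_nonneg_right h hsn
    _ = (2:ℝ)^k * ((n:ℝ)^k * s^n) + (2:ℝ)^k * s^n := by ring

lemma gosper_summable (c : ℝ) {r : ℝ} (hr0 : 0 ≤ r) (hr : r < 1) :
    Summable (fun n : ℕ => |(ascPochhammer ℝ n).eval c| / n.factorial * ((n:ℝ)+1) * r ^ n) := by
  obtain ⟨m, hm, hbd⟩ := gosper_growth c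
  refine ((gosper_summable_aux (m+1) hr0 hr).mul_left ((m:ℝ)^m)).of_nonneg_of_le
    (fun n => by positivity) (fun n => ?_)
  have hfac : (0:ℝ) < n.factorial := by exact_mod_cast n.factorial_pos
  have h1 : |(ascPochhammer ℝ n).eval c| / n.factorial ≤ (m:ℝ)^m * ((n:ℝ)+1)^m := by
    rw [div_le_iff₀ hfac]
    exact hbd n
  calc |(ascPochhammer ℝ n).eval c| / n.factorial * ((n:ℝ)+1) * r ^ n
      ≤ ((m:ℝ)^m * ((n:ℝ)+1)^m) * ((n:ℝ)+1) * r ^ n := by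
        apply mul_le_mul_of_nonneg_right (mul_le_mul_of_nonneg_right h1 (by positivity)) (by positivity)
    _ = (m:ℝ)^m * (((n:ℝ)+1)^(m+1) * r ^ n) := by ring

lemma gosper_binom (c : ℝ) {y : ℝ} (hy0 : 0 ≤ y) (hy1 : y < 1) :
    HasSum (fun n : ℕ => (ascPochhammer ℝ n).eval c / n.factorial * y ^ n)
      ((1 - y) ^ (-c) : ℝ) := by
  set r : ℝ := (1 + y) / 2 with hr
  have hyr : y < r := by rw [hr]; linarith
  have hr1 : r < 1 := by rw [hr]; linarith
  have hr0 : 0 < r := by rw [hr]; linarith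
  set q : ℕ → ℝ := fun n => (ascPochhammer ℝ n).eval c / n.factorial with hq
  set g : ℕ → ℝ → ℝ := fun n z => q n * z ^ n with hg
  set g' : ℕ → ℝ → ℝ := fun n z => q n * ((n:ℝ) * z ^ (n - 1)) with hg'
  set u : ℕ → ℝ := fun n => |q n| * (n:ℝ) * r ^ (n - 1) with hu
  have hqabs : ∀ n, |q n| = |(ascPochhammer ℝ n).eval c| / n.factorial := by
    intro n
    rw [hq, abs_div, Nat.abs_cast]
  have husum : Summable u := by
    refine ((gosper_summable c hr0.le hr1).mul_left (1/r)).of_nonneg_of_le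
      (fun n => by rw [hu]; positivity) (fun n => ?_)
    simp only [hu, hqabs]
    rcases Nat.eq_zero_or_pos n with h0 | h1
    · subst h0; simp; positivity
    · obtain ⟨k, rfl⟩ := Nat.exists_eq_succ_of_ne_zero h1.ne'
      have hpow : r ^ (k + 1 - 1) = r ^ (k+1) / r := by
        rw [Nat.add_sub_cancel, pow_succ, mul_div_assoc, div_self hr0.ne', mul_one]
      rw [hpow]
      have h2 : ((k:ℝ)+1) ≤ ((k+1:ℕ):ℝ) + 1 := by push_cast; linarith
      have hb : (0:ℝ) ≤ |(ascPochhammer ℝ (k+1)).eval c| / (k+1).factorial := by positivity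
      calc |(ascPochhammer ℝ (k+1)).eval c| / (k+1).factorial * ((k+1:ℕ):ℝ) * (r ^ (k+1) / r)
          = 1/r * (|(ascPochhammer ℝ (k+1)).eval c| / (k+1).factorial * (((k+1:ℕ):ℝ)) * r ^ (k+1)) := by
            ring
        _ ≤ 1/r * (|(ascPochhammer ℝ (k+1)).eval c| / (k+1).factorial * (((k+1:ℕ):ℝ)+1) * r ^ (k+1)) := by
            apply mul_le_mul_of_nonneg_left _ (by positivity)
            apply mul_le_mul_of_nonneg_right (mul_le_mul_of_nonneg_left (by linarith) hb) (by positivity)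
  have hbound : ∀ n (z : ℝ), |z| ≤ r → ‖g n z‖ ≤ |q n| * ((n:ℝ)+1) * r ^ n := by
    intro n z hz
    rw [hg]
    simp only [norm_mul, Real.norm_eq_abs, abs_pow]
    calc |q n| * |z| ^ n ≤ |q n| * r ^ n := by
          apply mul_le_mul_of_nonneg_left (pow_le_pow_left₀ (abs_nonneg z) hz n) (abs_nonneg _)
      _ ≤ |q n| * ((n:ℝ)+1) * r ^ n := by
          have h1 : |q n| ≤ |q n| * ((n:ℝ)+1) :=
            le_mul_of_one_le_right (abs_nonneg _) (by have := Nat.cast_nonneg (α:=ℝ) n; linarith)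
          exact mul_le_mul_of_nonneg_right h1 (pow_nonneg hr0.le n)
  have hsum_master : Summable (fun n => |q n| * ((n:ℝ)+1) * r ^ n) := by
    have := gosper_summable c hr0.le hr1
    simpa only [hqabs] using this
  have hSg : ∀ z : ℝ, |z| ≤ r → Summable (fun n => g n z) := by
    intro z hz
    exact Summable.of_norm_bounded hsum_master (fun n => hbound n z hz)
  have hg'bound : ∀ n (z : ℝ), z ∈ Set.Ioo (-r) r → ‖g' n z‖ ≤ u n := by
    intro n z hz
    rw [hg', hu]
    simp only [norm_mul, Real.norm_eq_abs, abs_pow, Nat.abs_cast]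
    have h1 : |z| ≤ r := by
      rw [abs_le]; exact ⟨hz.1.le, hz.2.le⟩
    calc |q n| * ((n:ℝ) * |z| ^ (n-1)) ≤ |q n| * ((n:ℝ) * r ^ (n-1)) := by
          apply mul_le_mul_of_nonneg_left _ (abs_nonneg _)
          exact mul_le_mul_of_nonneg_left (pow_le_pow_left₀ (abs_nonneg z) h1 _) (Nat.cast_nonneg n)
      _ = |q n| * (n:ℝ) * r ^ (n-1) := by ring
  have hderiv : ∀ n (z : ℝ), z ∈ Set.Ioo (-r) r → HasDerivAt (g n) (g' n z) z := by
    intro n z _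
    exact (hasDerivAt_pow n z).const_mul (q n)
  have h0mem : (0:ℝ) ∈ Set.Ioo (-r) r := ⟨by linarith, hr0⟩
  have hg0 : Summable fun n => g n 0 := hSg 0 (by rw [abs_zero]; exact hr0.le)
  set f : ℝ → ℝ := fun z => ∑' n, g n z with hf
  have hfderiv : ∀ z ∈ Set.Ioo (-r) r, HasDerivAt f (∑' n, g' n z) z := by
    intro z hz
    exact hasDerivAt_tsum_of_isPreconnected husum isOpen_Ioo
      (convex_Ioo _ _).isPreconnected hderiv hg'bound h0mem hg0 hz
  -- the ODE identity
  have hODE : ∀ z ∈ Set.Ioo (-r) r, (1 - z) * (∑' n, g' n z) = c * f z := by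
    intro z hz
    have hzr : |z| ≤ r := by rw [abs_le]; exact ⟨hz.1.le, hz.2.le⟩
    have hSg' : Summable (fun n => g' n z) :=
      Summable.of_norm_bounded husum (fun n => hg'bound n z hz)
    have hT : Summable (fun n => q n * (n:ℝ) * z ^ n) := by
      refine Summable.of_norm_bounded hsum_master (fun n => ?_)
      simp only [norm_mul, Real.norm_eq_abs, abs_pow, Nat.abs_cast]
      have h1 : |z| ^ n ≤ r ^ n := pow_le_pow_left₀ (abs_nonneg z) hzr n
      have h2 : |q n| * (n:ℝ) ≤ |q n| * ((n:ℝ)+1) := by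
        have h3 := Nat.cast_nonneg (α:=ℝ) n
        nlinarith [abs_nonneg (q n)]
      exact mul_le_mul h2 h1 (pow_nonneg (abs_nonneg z) n) (by positivity)
    have hqrec : ∀ n : ℕ, g' (n+1) z = c * g n z + q n * (n:ℝ) * z ^ n := by
      intro n
      have hasc : (ascPochhammer ℝ (n+1)).eval c = (ascPochhammer ℝ n).eval c * (c + n) := by
        rw [ascPochhammer_succ_right]
        simp [mul_comm]
      have hfac : ((n+1).factorial : ℝ) = (n.factorial : ℝ) * ((n:ℝ)+1) := by
        rw [Nat.factorial_succ]; push_cast; ring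
      have hfacpos : (0:ℝ) < n.factorial := by exact_mod_cast n.factorial_pos
      rw [hg', hg, hq]
      simp only [Nat.add_sub_cancel, Nat.cast_add, Nat.cast_one]
      rw [hasc, hfac]
      field_simp
    have hzero : g' 0 z = 0 := by rw [hg']; simp
    have e1 : ∑' n, g' n z = c * f z + ∑' n, q n * (n:ℝ) * z ^ n := by
      rw [Summable.tsum_eq_zero_add hSg', hzero, zero_add]
      calc ∑' n, g' (n+1) z = ∑' n, (c * g n z + q n * (n:ℝ) * z ^ n) := by
            exact tsum_congr hqrec
        _ = c * f z + ∑' n, q n * (n:ℝ) * z ^ n := by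
            rw [Summable.tsum_add ((hSg z hzr).mul_left c) hT, tsum_mul_left]
    have e2 : z * (∑' n, g' n z) = ∑' n, q n * (n:ℝ) * z ^ n := by
      rw [← tsum_mul_left]
      apply tsum_congr
      intro n
      rcases Nat.eq_zero_or_pos n with h0 | h1
      · subst h0; rw [hzero]; simp
      · obtain ⟨k, rfl⟩ := Nat.exists_eq_succ_of_ne_zero h1.ne'
        simp only [hg', Nat.succ_sub_one, pow_succ]
        ring
    rw [sub_mul, one_mul, e2, e1]
    ring
  -- h is constant
  have hmem : ∀ z ∈ Set.Icc (0:ℝ) y, z ∈ Set.Ioo (-r) r := by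
    intro z hz
    exact ⟨by linarith [hz.1], by linarith [hz.2]⟩
  set h : ℝ → ℝ := fun z => f z * (1 - z) ^ c with hh
  have hhderiv : ∀ z ∈ Set.Ioo (-r) r, HasDerivAt h 0 z := by
    intro z hz
    have hz1 : 0 < 1 - z := by linarith [hz.2]
    have hd1 : HasDerivAt (fun z : ℝ => 1 - z) (-1) z := (hasDerivAt_id z).const_sub 1
    have hd2 : HasDerivAt (fun z : ℝ => (1 - z) ^ c) (-1 * c * (1 - z) ^ (c - 1)) z :=
      hd1.rpow_const (Or.inl hz1.ne')
    have hd3 : HasDerivAt h ((∑' n, g' n z) * (1 - z) ^ c + f z * (-1 * c * (1 - z) ^ (c - 1))) z :=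
      (hfderiv z hz).mul hd2
    convert hd3 using 1
    have key := hODE z hz
    have hcc : (1 - z) ^ (c - 1) * (1 - z) = (1 - z) ^ c := by
      rw [← Real.rpow_add_one hz1.ne']
      ring_nf
    have : f z * (-1 * c * (1 - z) ^ (c-1)) = -(c * f z) * (1 - z) ^ (c-1) := by ring
    rw [this, ← key]
    have expand : (1 - z) * (∑' n, g' n z) * (1-z)^(c-1) = (∑' n, g' n z) * ((1-z)^(c-1) * (1-z)) := by ring
    rw [neg_mul, expand, hcc]
    ring
  have hconst : h y = h 0 := by
    have hcont : ContinuousOn h (Set.Icc 0 y) := by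
      intro z hz
      exact ((hhderiv z (hmem z hz)).continuousAt).continuousWithinAt
    have := constant_of_has_deriv_right_zero hcont
      (fun z hz => ((hhderiv z (hmem z ⟨hz.1, hz.2.le⟩)).hasDerivWithinAt))
    exact this y (Set.right_mem_Icc.2 hy0)
  have hf0 : f 0 = 1 := by
    have h1 : ∀ n : ℕ, n ≠ 0 → g n 0 = 0 := fun n hn => by simp [hg, zero_pow hn]
    have h2 : f 0 = g 0 0 := tsum_eq_single 0 h1
    rw [h2]
    simp [hg, hq]
  have hy1' : 0 < 1 - y := by linarith
  have hval : f y * (1 - y) ^ c = 1 := by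
    have : h y = f y * (1 - y) ^ c := rfl
    rw [← this, hconst, hh]
    simp [hf0]
  have hfy : f y = (1 - y) ^ (-c) := by
    have hpos : (0:ℝ) < (1 - y) ^ c := Real.rpow_pos_of_pos hy1' c
    rw [Real.rpow_neg hy1'.le]
    field_simp at hval ⊢
    linarith [hval]
  have hsum : HasSum (fun n => g n y) (f y) :=
    (hSg y (by rw [abs_of_nonneg hy0]; exact hyr.le)).hasSum
  rw [hfy] at hsum
  exact hsum

lemma gosper_ratio (b : ℝ) (n : ℕ) :
    (ascPochhammer ℝ n).eval b * ((b+n) * (b+n+1)) = b * (b+1) * (ascPochhammer ℝ n).eval (b+2) := by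
  have A : ∏ i ∈ Finset.range (n+2), (b+i) = (∏ i ∈ Finset.range n, (b+i)) * ((b+n)*(b+n+1)) := by
    rw [Finset.prod_range_succ, Finset.prod_range_succ]
    push_cast; ring
  have B : ∏ i ∈ Finset.range (n+2), (b+i) = b*(b+1) * ∏ i ∈ Finset.range n, (b+2+i) := by
    rw [Finset.prod_range_succ', Finset.prod_range_succ']
    have : ∀ i ∈ Finset.range n, (b + ((i+1+1:ℕ):ℝ)) = (b+2+i) := by
      intro i _; push_cast; ring
    rw [Finset.prod_congr rfl this]
    push_cast; ring
  rw [gosper_asc_eval_prod, gosper_asc_eval_prod, ← A, B]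

lemma gosper_int_eval {b : ℝ} (hb : 0 < b) (d : ℝ) (n : ℕ) (x : ℝ) :
    ∫ t in Set.Ioc (0:ℝ) 1, t ^ (b-1) * (d * (x*t)^n * (1-t))
      = d * x^n * (1/(b+n) - 1/(b+n+1)) := by
  have hbn : (0:ℝ) < b + n := by positivity
  have hbn1 : (0:ℝ) < b + n + 1 := by positivity
  have hEq : Set.EqOn (fun t : ℝ => t ^ (b-1) * (d * (x*t)^n * (1-t)))
      (fun t : ℝ => (d * x^n) * (t^(b+(n:ℝ)-1) - t^(b+(n:ℝ)))) (Set.Ioc 0 1) := by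
    intro t ht
    have ht0 : 0 < t := ht.1
    have e1 : (x*t)^n = x^n * t^n := mul_pow x t n
    have e2 : (t:ℝ)^n = t ^ ((n:ℕ):ℝ) := (Real.rpow_natCast t n).symm
    have e3 : t ^ (b-1) * t ^ ((n:ℕ):ℝ) = t ^ (b+(n:ℝ)-1) := by
      rw [← Real.rpow_add ht0]; ring_nf
    have e4 : t ^ (b+(n:ℝ)-1) * t = t ^ (b+(n:ℝ)) := by
      rw [← Real.rpow_add_one ht0.ne']; ring_nf
    simp only
    calc t ^ (b-1) * (d * (x*t)^n * (1-t))
        = (d * x^n) * ((t ^ (b-1) * t ^ ((n:ℕ):ℝ)) * (1-t)) := by rw [e1, ← e2]; ring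
      _ = (d * x^n) * (t^(b+(n:ℝ)-1) - t^(b+(n:ℝ)-1) * t) := by rw [e3]; ring
      _ = (d * x^n) * (t^(b+(n:ℝ)-1) - t^(b+(n:ℝ))) := by rw [e4]
  rw [MeasureTheory.setIntegral_congr_fun measurableSet_Ioc hEq]
  rw [MeasureTheory.integral_const_mul]
  have key : ∫ t in Set.Ioc (0:ℝ) 1, (t^(b+(n:ℝ)-1) - t^(b+(n:ℝ))) = 1/(b+n) - 1/(b+n+1) := by
    rw [← intervalIntegral.integral_of_le zero_le_one]
    rw [intervalIntegral.integral_sub (intervalIntegral.intervalIntegrable_rpow' (by linarith))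
      (intervalIntegral.intervalIntegrable_rpow' (by linarith))]
    rw [integral_rpow (Or.inl (by linarith)), integral_rpow (Or.inl (by linarith))]
    rw [Real.one_rpow, Real.one_rpow, Real.zero_rpow (by linarith), Real.zero_rpow (by linarith)]
    have : b + (n:ℝ) - 1 + 1 = b + n := by ring
    rw [this]
    norm_num
  rw [key]

lemma gosper_ftc {a b x : ℝ} (ha : 0 < a) (hb : 0 < b) (hx0 : 0 < x) (hx1 : x < 1)
    (hxab : (a+b)*x = b) :
    ∫ t in Set.Ioc (0:ℝ) 1, t^(b-1) * ((1-x*t)^(a-1) * (1-t)) = (1-x)^a / b := by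
  set φ : ℝ → ℝ := fun t => t^(b-1) * ((1-x*t)^(a-1) * (1-t)) with hφ
  set F : ℝ → ℝ := fun t => t^b * (1-x*t)^a with hF
  have hpos : ∀ t ∈ Set.Icc (0:ℝ) 1, 0 < 1 - x*t := by
    intro t ht
    have h1 : x * t ≤ x * 1 := mul_le_mul_of_nonneg_left ht.2 hx0.le
    linarith
  have hcont : ContinuousOn F (Set.Icc 0 1) := by
    apply ContinuousOn.mul
    · exact ContinuousOn.rpow_const continuousOn_id (fun t _ => Or.inr hb.le)
    · apply ContinuousOn.rpow_const
      · exact continuousOn_const.sub (continuousOn_const.mul continuousOn_id)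
      · exact fun t ht => Or.inl (hpos t ht).ne'
  have hderiv : ∀ t ∈ Set.Ioo (0:ℝ) 1, HasDerivWithinAt F (b * φ t) (Set.Ioi t) t := by
    intro t ht
    apply HasDerivAt.hasDerivWithinAt
    have ht0 : 0 < t := ht.1
    have hxt : 0 < 1 - x*t := hpos t ⟨ht.1.le, ht.2.le⟩
    have d1 : HasDerivAt (fun s : ℝ => s ^ b) (b * t^(b-1)) t :=
      Real.hasDerivAt_rpow_const (Or.inl ht0.ne')
    have dlin : HasDerivAt (fun s : ℝ => 1 - x*s) (-x) t := by
      simpa using ((hasDerivAt_id t).const_mul x).const_sub 1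
    have d2 : HasDerivAt (fun s : ℝ => (1 - x*s)^a) (-x * a * (1-x*t)^(a-1)) t :=
      dlin.rpow_const (Or.inl hxt.ne')
    have hmul : HasDerivAt F (b * t^(b-1) * (1-x*t)^a + t^b * (-x * a * (1-x*t)^(a-1))) t :=
      d1.mul d2
    refine HasDerivAt.congr_deriv hmul (Eq.symm ?_)
    have e1 : t^b = t^(b-1) * t := by rw [← Real.rpow_add_one ht0.ne']; ring_nf
    have e2 : (1-x*t)^a = (1-x*t)^(a-1) * (1-x*t) := by
      rw [← Real.rpow_add_one hxt.ne']; ring_nf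
    show b * (t ^ (b-1) * ((1-x*t)^(a-1) * (1-t))) = _
    rw [e1, e2]
    linear_combination (t^(b-1) * ((1-x*t)^(a-1)) * t) * hxab
  have hint : IntervalIntegrable (fun t => b * φ t) MeasureTheory.volume 0 1 := by
    have base : IntervalIntegrable (fun t : ℝ => t^(b-1)) MeasureTheory.volume 0 1 :=
      intervalIntegral.intervalIntegrable_rpow' (by linarith)
    have hIcc : Set.uIcc (0:ℝ) 1 = Set.Icc 0 1 := Set.uIcc_of_le zero_le_one
    have cont : ContinuousOn (fun t : ℝ => b * ((1-x*t)^(a-1) * (1-t))) (Set.uIcc (0:ℝ) 1) := by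
      rw [hIcc]
      apply ContinuousOn.mul continuousOn_const
      apply ContinuousOn.mul
      · apply ContinuousOn.rpow_const
        · exact continuousOn_const.sub (continuousOn_const.mul continuousOn_id)
        · exact fun t ht => Or.inl (hpos t ht).ne'
      · exact continuousOn_const.sub continuousOn_id
    have := base.mul_continuousOn cont
    have heq : (fun t : ℝ => t^(b-1) * (b * ((1-x*t)^(a-1) * (1-t)))) = fun t => b * φ t := by
      funext t; rw [hφ]; ring
    rwa [heq] at this
  have hmain := intervalIntegral.integral_eq_sub_of_hasDeriv_right_of_le zero_le_one hcont hderiv hint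
  have hF1 : F 1 = (1-x)^a := by rw [hF]; simp [Real.one_rpow]
  have hF0 : F 0 = 0 := by rw [hF]; simp [Real.zero_rpow hb.ne']
  rw [hF1, hF0, sub_zero] at hmain
  rw [intervalIntegral.integral_const_mul] at hmain
  rw [intervalIntegral.integral_of_le zero_le_one] at hmain
  rw [hφ] at hmain ⊢
  field_simp at hmain ⊢
  linarith [hmain]

/-- Gosper's strange series evaluation:
`₂F₁[1-a, b; b+2; b/(a+b)] = (b+1) (a/(a+b))^a` for positive reals `a`, `b`. -/
theorem gosper_strange_series (a b : ℝ) (ha : 0 < a) (hb : 0 < b) :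
    ∑' n : ℕ, (ascPochhammer ℝ n).eval (1 - a) * (ascPochhammer ℝ n).eval b /
        ((ascPochhammer ℝ n).eval (b + 2) * n.factorial) * (b / (a + b)) ^ n
      = (b + 1) * (a / (a + b)) ^ a := by
  have hab : 0 < a + b := by linarith
  set x : ℝ := b / (a + b) with hxdef
  have hx0 : 0 < x := div_pos hb hab
  have hx1 : x < 1 := by
    rw [hxdef, div_lt_one hab]; linarith
  have hxab : (a + b) * x = b := by
    rw [hxdef]; field_simp
  have h1x : 1 - x = a / (a + b) := by
    rw [hxdef]; field_simp; ring
  set c : ℕ → ℝ := fun n => (ascPochhammer ℝ n).eval (1-a) / n.factorial with hc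
  set g : ℕ → ℝ → ℝ := fun n t => t^(b-1) * (c n * (x*t)^n * (1-t)) with hg
  have hint_eval : ∀ n : ℕ, ∫ t in Set.Ioc (0:ℝ) 1, g n t
      = c n * x^n * (1/(b+n) - 1/(b+n+1)) := fun n => gosper_int_eval hb (c n) n x
  -- term identity
  have hterm : ∀ n : ℕ,
      (ascPochhammer ℝ n).eval (1 - a) * (ascPochhammer ℝ n).eval b /
        ((ascPochhammer ℝ n).eval (b + 2) * n.factorial) * x ^ n
      = b * (b+1) * (c n * x^n * (1/(b+n) - 1/(b+n+1))) := by
    intro n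
    have hC : (0:ℝ) < (ascPochhammer ℝ n).eval (b+2) :=
      ascPochhammer_pos n (b+2) (by linarith)
    have hF : (0:ℝ) < n.factorial := by exact_mod_cast n.factorial_pos
    have hbn : (0:ℝ) < b + n := by positivity
    have hbn1 : (0:ℝ) < b + n + 1 := by positivity
    have hr := gosper_ratio b n
    have hBC : (ascPochhammer ℝ n).eval b / (ascPochhammer ℝ n).eval (b+2)
        = b * (b+1) / ((b+n) * (b+n+1)) := by
      rw [div_eq_div_iff hC.ne' (by positivity)]
      linear_combination hr
    have hsub : 1/(b+n) - 1/(b+n+1) = 1/((b+n)*(b+n+1)) := by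
      field_simp; ring
    calc (ascPochhammer ℝ n).eval (1 - a) * (ascPochhammer ℝ n).eval b /
        ((ascPochhammer ℝ n).eval (b + 2) * n.factorial) * x ^ n
        = ((ascPochhammer ℝ n).eval (1-a) / n.factorial) *
            ((ascPochhammer ℝ n).eval b / (ascPochhammer ℝ n).eval (b+2)) * x ^ n := by
          ring
      _ = ((ascPochhammer ℝ n).eval (1-a) / n.factorial) *
            (b * (b+1) / ((b+n) * (b+n+1))) * x ^ n := by rw [hBC]
      _ = b * (b+1) * (c n * x^n * (1/((b+n)*(b+n+1)))) := by rw [hc]; ring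
      _ = b * (b+1) * (c n * x^n * (1/(b+n) - 1/(b+n+1))) := by rw [hsub]
  -- integrability of each g n
  have hintg : ∀ n : ℕ, MeasureTheory.IntegrableOn (g n) (Set.Ioc 0 1) MeasureTheory.volume := by
    intro n
    have base : IntervalIntegrable (fun t : ℝ => t^(b-1)) MeasureTheory.volume 0 1 :=
      intervalIntegral.intervalIntegrable_rpow' (by linarith)
    have cont : ContinuousOn (fun t : ℝ => c n * (x*t)^n * (1-t)) (Set.uIcc (0:ℝ) 1) := by
      apply Continuous.continuousOn; fun_prop
    have h2 := base.mul_continuousOn cont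
    rw [intervalIntegrable_iff, Set.uIoc_of_le zero_le_one] at h2
    exact h2
  -- summability of integrals of norms
  have hnorm_eval : ∀ n : ℕ, (∫ t in Set.Ioc (0:ℝ) 1, ‖g n t‖)
      = |c n| * x^n * (1/(b+n) - 1/(b+n+1)) := by
    intro n
    have hEq : Set.EqOn (fun t => ‖g n t‖)
        (fun t : ℝ => t^(b-1) * (|c n| * (x*t)^n * (1-t))) (Set.Ioc 0 1) := by
      intro t ht
      have ht0 : 0 < t := ht.1
      have h1 : (0:ℝ) ≤ t^(b-1) := Real.rpow_nonneg ht0.le _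
      have h2 : (0:ℝ) ≤ (x*t)^n := by positivity
      have h3 : (0:ℝ) ≤ 1 - t := by linarith [ht.2]
      simp only [Real.norm_eq_abs, hg, abs_mul, abs_of_nonneg h1, abs_of_nonneg h2,
        abs_of_nonneg h3]
    rw [MeasureTheory.setIntegral_congr_fun measurableSet_Ioc hEq]
    exact gosper_int_eval hb (|c n|) n x
  have hsummable_norm : Summable (fun n => ∫ t in Set.Ioc (0:ℝ) 1, ‖g n t‖) := by
    have master : Summable (fun n : ℕ =>
        (1/b) * (|(ascPochhammer ℝ n).eval (1-a)| / n.factorial * ((n:ℝ)+1) * x ^ n)) :=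
      (gosper_summable (1-a) hx0.le hx1).mul_left _
    refine master.of_nonneg_of_le (fun n => ?_) (fun n => ?_)
    · exact MeasureTheory.integral_nonneg (fun t => norm_nonneg _)
    · rw [hnorm_eval]
      have hbn : (0:ℝ) < b + n := by positivity
      have hbn1 : (0:ℝ) < b + n + 1 := by positivity
      have hcabs : |c n| = |(ascPochhammer ℝ n).eval (1-a)| / n.factorial := by
        rw [hc, abs_div, Nat.abs_cast]
      have h1 : 1/(b+n) - 1/(b+n+1) ≤ 1/b := by
        have h2 : 1/(b+n) ≤ 1/b := by
          apply one_div_le_one_div_of_le hb; linarith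
        have h3 : 0 < 1/(b+n+1) := by positivity
        linarith
      have h4 : (0:ℝ) ≤ |c n| * x^n := by positivity
      calc |c n| * x^n * (1/(b+n) - 1/(b+n+1)) ≤ |c n| * x^n * (1/b) :=
            mul_le_mul_of_nonneg_left h1 h4
        _ ≤ (1/b) * (|(ascPochhammer ℝ n).eval (1-a)| / n.factorial * ((n:ℝ)+1) * x ^ n) := by
            rw [hcabs]
            have h5 : |(ascPochhammer ℝ n).eval (1-a)| / n.factorial
                ≤ |(ascPochhammer ℝ n).eval (1-a)| / n.factorial * ((n:ℝ)+1) :=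
              le_mul_of_one_le_right (by positivity)
                (by have := Nat.cast_nonneg (α:=ℝ) n; linarith)
            have h6 : (0:ℝ) ≤ x ^ n := by positivity
            have h7 : (0:ℝ) < 1/b := by positivity
            calc |(ascPochhammer ℝ n).eval (1-a)| / n.factorial * x^n * (1/b)
                ≤ |(ascPochhammer ℝ n).eval (1-a)| / n.factorial * ((n:ℝ)+1) * x^n * (1/b) :=
                  mul_le_mul_of_nonneg_right (mul_le_mul_of_nonneg_right h5 h6) h7.le
              _ = (1/b) * (|(ascPochhammer ℝ n).eval (1-a)| / n.factorial * ((n:ℝ)+1) * x ^ n) := by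
                  ring
  -- swap sum and integral
  have hswap := MeasureTheory.integral_tsum_of_summable_integral_norm hintg hsummable_norm
  -- pointwise sum
  have hptwise : Set.EqOn (fun t => ∑' n, g n t)
      (fun t : ℝ => t^(b-1) * ((1-x*t)^(a-1) * (1-t))) (Set.Ioc 0 1) := by
    intro t ht
    have ht0 : 0 < t := ht.1
    have hxt0 : 0 ≤ x*t := by positivity
    have hxt1 : x*t < 1 := by
      have : x * t ≤ x * 1 := mul_le_mul_of_nonneg_left ht.2 hx0.le
      linarith
    have hbs := gosper_binom (1-a) hxt0 hxt1
    have hexp : -(1-a) = a - 1 := by ring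
    rw [hexp] at hbs
    have e1 : (fun n : ℕ => g n t)
        = fun n => ((ascPochhammer ℝ n).eval (1-a) / n.factorial * (x*t)^n) * (t^(b-1) * (1-t)) := by
      funext n; rw [hg, hc]; ring
    simp only
    rw [e1, tsum_mul_right, hbs.tsum_eq]
    ring
  -- final chain
  calc ∑' n : ℕ, (ascPochhammer ℝ n).eval (1 - a) * (ascPochhammer ℝ n).eval b /
        ((ascPochhammer ℝ n).eval (b + 2) * n.factorial) * x ^ n
      = ∑' n : ℕ, b * (b+1) * (c n * x^n * (1/(b+n) - 1/(b+n+1))) := tsum_congr hterm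
    _ = ∑' n : ℕ, b * (b+1) * ∫ t in Set.Ioc (0:ℝ) 1, g n t := by
        refine tsum_congr (fun n => ?_); rw [hint_eval n]
    _ = b * (b+1) * ∑' n : ℕ, ∫ t in Set.Ioc (0:ℝ) 1, g n t := tsum_mul_left
    _ = b * (b+1) * ∫ t in Set.Ioc (0:ℝ) 1, ∑' n, g n t := by rw [hswap]
    _ = b * (b+1) * ∫ t in Set.Ioc (0:ℝ) 1, t^(b-1) * ((1-x*t)^(a-1) * (1-t)) := by
        rw [MeasureTheory.setIntegral_congr_fun measurableSet_Ioc hptwise]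
    _ = b * (b+1) * ((1-x)^a / b) := by rw [gosper_ftc ha hb hx0 hx1 hxab]
    _ = (b+1) * (1-x)^a := by field_simp
    _ = (b+1) * (a / (a+b)) ^ a := by rw [h1x]
end

section
/- The double series ∑_{m≥0, n≥1} [C(2n,n) / ((m+n+1) n (n+1))] · [n ((2n+1)/(n+1))^m − (n+1) ((2n−1)/n)^m] / (8^m 16^n) converges and equals 16 − 8√3 + 8 ln(7 (2 + √3)^2 / 128), where C(2n,n) is the central binomial coefficient. -/
lemma centralBinom_le_four_pow (n : ℕ) : Nat.centralBinom n ≤ 4 ^ n := by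
  induction n with
  | zero => simp [Nat.centralBinom]
  | succ k ih =>
    have h := Nat.succ_mul_centralBinom_succ k
    have h2 : (k+1) * Nat.centralBinom (k+1) ≤ (k+1) * (4 * Nat.centralBinom k) := by
      rw [h]; ring_nf; nlinarith [Nat.centralBinom_pos k]
    have := Nat.le_of_mul_le_mul_left h2 (Nat.succ_pos k)
    calc Nat.centralBinom (k+1) ≤ 4 * Nat.centralBinom k := this
    _ ≤ 4 * 4 ^ k := by omega
    _ = 4 ^ (k+1) := by ring

lemma catalan_le_four_pow (n : ℕ) : (catalan n : ℝ) ≤ 4 ^ n := by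
  have h1 : catalan n ≤ Nat.centralBinom n := by
    calc catalan n ≤ (n+1) * catalan n := Nat.le_mul_of_pos_left _ (Nat.succ_pos n)
    _ = Nat.centralBinom n := succ_mul_catalan_eq_centralBinom n
  have := centralBinom_le_four_pow n
  have : catalan n ≤ 4 ^ n := le_trans h1 this
  exact_mod_cast this

lemma cat_term_le {x : ℝ} (h0 : 0 ≤ x) (hx : x ≤ 1/16) (k : ℕ) :
    (catalan k : ℝ) * x ^ k ≤ (1/4 : ℝ) ^ k := by
  calc (catalan k : ℝ) * x ^ k ≤ 4 ^ k * x ^ k := by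
        apply mul_le_mul_of_nonneg_right (catalan_le_four_pow k) (pow_nonneg h0 k)
    _ = (4 * x) ^ k := by rw [mul_pow]
    _ ≤ (1/4 : ℝ) ^ k := by
        apply pow_le_pow_left₀ (by linarith) (by linarith)

lemma cat_term_nonneg {x : ℝ} (h0 : 0 ≤ x) (k : ℕ) :
    0 ≤ (catalan k : ℝ) * x ^ k :=
  mul_nonneg (Nat.cast_nonneg _) (pow_nonneg h0 k)

lemma cat_summable {x : ℝ} (h0 : 0 ≤ x) (hx : x ≤ 1/16) :
    Summable (fun k => (catalan k : ℝ) * x ^ k) :=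
  Summable.of_nonneg_of_le (cat_term_nonneg h0) (cat_term_le h0 hx)
    (summable_geometric_of_lt_one (by norm_num) (by norm_num))

lemma cat_hasSum {x : ℝ} (h0 : 0 ≤ x) (hx : x ≤ 1/16) :
    HasSum (fun k => (catalan k : ℝ) * x ^ k) (2 / (1 + Real.sqrt (1 - 4*x))) := by
  rcases eq_or_lt_of_le h0 with h|hpos
  · -- x = 0
    subst h
    have : HasSum (fun k => (catalan k : ℝ) * (0:ℝ) ^ k) 1 := by
      have := hasSum_single (f := fun k => (catalan k : ℝ) * (0:ℝ) ^ k) 0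
        (fun b hb => by cases b with
          | zero => exact absurd rfl hb
          | succ n => simp)
      simpa using this
    have he : (2:ℝ)/(1+Real.sqrt (1-4*0)) = 1 := by norm_num
    rw [show (0:ℝ) = 4*0/4 by norm_num] at this ⊢
    norm_num at this ⊢
    exact this
  · have hs := cat_summable h0 hx
    set u : ℝ := Real.sqrt (1 - 4*x) with hu
    have h34 : (0:ℝ) ≤ 1 - 4*x := by linarith
    have hu2 : u^2 = 1 - 4*x := Real.sq_sqrt h34
    have hupos : 0 < u := Real.sqrt_pos.mpr (by linarith)
    have huhalf : (1/2 : ℝ) ≤ u := by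
      rw [hu]
      rw [show (1/2:ℝ) = Real.sqrt (1/4) by
        rw [show (1/4:ℝ) = (1/2)^2 by norm_num, Real.sqrt_sq (by norm_num)]]
      exact Real.sqrt_le_sqrt (by linarith)
    have hult : u < 1 := by
      rw [hu]
      have : Real.sqrt (1-4*x) < Real.sqrt 1 := by
        apply Real.sqrt_lt_sqrt h34; linarith
      simpa using this
    set T : ℝ := ∑' k, (catalan k : ℝ) * x ^ k with hT
    have hTsum : HasSum (fun k => (catalan k : ℝ) * x ^ k) T := hs.hasSum
    -- T ≤ 4/3
    have hTle : T ≤ 4/3 := by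
      have := Summable.tsum_le_tsum (cat_term_le h0 hx) hs
        (summable_geometric_of_lt_one (by norm_num) (by norm_num : (1/4:ℝ) < 1))
      rw [tsum_geometric_of_lt_one (by norm_num) (by norm_num)] at this
      · norm_num at this; linarith
    -- Cauchy product
    have hnorm : Summable fun k => ‖(catalan k : ℝ) * x ^ k‖ := by
      simpa [Real.norm_eq_abs, abs_of_nonneg h0, abs_of_nonneg (cat_term_nonneg h0 _)] using hs
    have hcauchy : T * T = ∑' n, ∑ kl ∈ Finset.HasAntidiagonal.antidiagonal n,
        ((catalan kl.1 : ℝ) * x ^ kl.1) * ((catalan kl.2 : ℝ) * x ^ kl.2) :=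
      tsum_mul_tsum_eq_tsum_sum_antidiagonal_of_summable_norm hnorm hnorm
    have hinner : ∀ n : ℕ, ∑ kl ∈ Finset.HasAntidiagonal.antidiagonal n,
        ((catalan kl.1 : ℝ) * x ^ kl.1) * ((catalan kl.2 : ℝ) * x ^ kl.2)
        = (catalan (n+1) : ℝ) * x ^ n := by
      intro n
      have : ∀ kl ∈ Finset.HasAntidiagonal.antidiagonal n,
          ((catalan kl.1 : ℝ) * x ^ kl.1) * ((catalan kl.2 : ℝ) * x ^ kl.2)
          = ((catalan kl.1 : ℝ) * (catalan kl.2 : ℝ)) * x ^ n := by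
        intro kl hkl
        rw [Finset.HasAntidiagonal.mem_antidiagonal] at hkl
        rw [← hkl, pow_add]
        ring
      rw [Finset.sum_congr rfl this, ← Finset.sum_mul]
      congr 1
      rw [catalan_succ' n]
      push_cast
      rfl
    have hquad : x * (T * T) = T - 1 := by
      rw [hcauchy]
      simp_rw [hinner]
      have hSsum : Summable (fun n => (catalan (n+1) : ℝ) * x ^ n) := by
        apply Summable.of_nonneg_of_le
          (fun n => mul_nonneg (Nat.cast_nonneg _) (pow_nonneg h0 n))
        · intro n
          calc (catalan (n+1) : ℝ) * x ^ n ≤ 4^(n+1) * x ^ n :=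
                mul_le_mul_of_nonneg_right (catalan_le_four_pow (n+1)) (pow_nonneg h0 n)
            _ = 4 * (4*x)^n := by rw [mul_pow]; ring
            _ ≤ 4 * (1/4:ℝ)^n := by
                have : (4*x)^n ≤ (1/4:ℝ)^n := pow_le_pow_left₀ (by linarith) (by linarith) n
                linarith
        · exact (summable_geometric_of_lt_one (by norm_num) (by norm_num)).mul_left 4
      rw [← tsum_mul_left]
      have h1 : (fun n => x * ((catalan (n+1) : ℝ) * x ^ n))
          = fun n => (catalan (n+1) : ℝ) * x ^ (n+1) := by
        funext n; ring
      rw [h1]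
      have h2 := Summable.tsum_eq_zero_add hs
      simp only [pow_zero, catalan_zero, Nat.cast_one, mul_one] at h2
      rw [← hT] at h2
      linarith [h2]
    -- solve quadratic
    have hfac : x * (T - 2/(1+u)) * (T - 2/(1-u)) = x * T^2 - T + 1 := by
      have h1u : (1:ℝ) + u ≠ 0 := by positivity
      have h2u : (1:ℝ) - u ≠ 0 := by linarith
      field_simp
      nlinarith [hu2, hpos]
    have hzero : x * (T - 2/(1+u)) * (T - 2/(1-u)) = 0 := by
      rw [hfac]; nlinarith [hquad]
    have hBbig : (4:ℝ) ≤ 2/(1-u) := by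
      rw [le_div_iff₀ (by linarith)]
      linarith
    have hTneB : T - 2/(1-u) ≠ 0 := by
      intro h
      have : T = 2/(1-u) := by linarith
      linarith [hBbig, hTle, this]
    have hTA : T = 2/(1+u) := by
      rcases mul_eq_zero.mp hzero with h|h
      · rcases mul_eq_zero.mp h with h'|h'
        · exact absurd h' (ne_of_gt hpos)
        · linarith
      · exact absurd h hTneB
    rw [← hTA]
    exact hTsum

lemma sqrt_lin_hasDeriv {y : ℝ} (h : 1 - 4*y ≠ 0) :
    HasDerivAt (fun z => Real.sqrt (1 - 4*z)) (-2 / Real.sqrt (1 - 4*y)) y := by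
  have hinner : HasDerivAt (fun z : ℝ => 1 - 4*z) (-4) y := by
    simpa using ((hasDerivAt_id y).const_mul (4:ℝ)).const_sub 1
  have := (Real.hasDerivAt_sqrt h).comp y hinner
  refine this.congr_deriv ?_
  field_simp
  ring

noncomputable def Hfun (z : ℝ) : ℝ :=
  Real.log ((1 + Real.sqrt (1 - 4*z))/2) + 1 - Real.sqrt (1 - 4*z)

lemma H_hasDeriv {y : ℝ} (h2 : y < 1/8) :
    HasDerivAt Hfun (2 / (1 + Real.sqrt (1 - 4*y))) y := by
  have hpos : 0 < 1 - 4*y := by linarith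
  set u := Real.sqrt (1 - 4*y) with hu
  have hupos : 0 < u := Real.sqrt_pos.mpr hpos
  have hsq := sqrt_lin_hasDeriv (ne_of_gt hpos)
  have hhalf : HasDerivAt (fun z => (1 + Real.sqrt (1 - 4*z))/2) ((-2/u)/2) y :=
    (hsq.const_add 1).div_const 2
  have hlog : HasDerivAt (fun z => Real.log ((1 + Real.sqrt (1 - 4*z))/2))
      (((-2/u)/2) / ((1+u)/2)) y := by
    apply HasDerivAt.log hhalf
    positivity
  have total := (hlog.add_const 1).sub hsq
  refine total.congr_deriv ?_
  have h1u : (1:ℝ) + u ≠ 0 := by positivity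
  field_simp
  ring

lemma S1_hasDeriv {y : ℝ} (h1 : -(1/8) < y) (h2 : y < 1/8) :
    HasDerivAt (fun z => ∑' k, (catalan k : ℝ) * z^(k+1)/(k+1))
      (∑' k, (catalan k : ℝ) * y^k) y := by
  have main := hasDerivAt_tsum_of_isPreconnected
    (𝕜 := ℝ) (F := ℝ)
    (u := fun k => (1/2:ℝ)^k) (t := Set.Ioo (-(1/8):ℝ) (1/8))
    (g := fun k z => (catalan k : ℝ) * z^(k+1)/(k+1))
    (g' := fun k z => (catalan k : ℝ) * z^k)
    (y₀ := 0) (y := y)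
    (summable_geometric_of_lt_one (by norm_num) (by norm_num))
    isOpen_Ioo (convex_Ioo _ _).isPreconnected ?_ ?_ ?_ ?_ ?_
  · exact main
  · intro k z _
    have h := ((hasDerivAt_pow (k+1) z).const_mul ((catalan k : ℝ))).div_const ((k:ℝ)+1)
    refine h.congr_deriv ?_
    simp only [Nat.add_sub_cancel]
    have : ((k:ℝ)+1) ≠ 0 := by positivity
    push_cast
    field_simp
  · intro k z hz
    rw [Real.norm_eq_abs, abs_mul, abs_pow]
    calc |(catalan k : ℝ)| * |z|^k ≤ 4^k * (1/8)^k := by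
          apply mul_le_mul
          · rw [abs_of_nonneg (Nat.cast_nonneg _)]
            exact catalan_le_four_pow k
          · apply pow_le_pow_left₀ (abs_nonneg z)
            rw [abs_le]
            constructor <;> [linarith [hz.1]; linarith [hz.2]]
          · positivity
          · positivity
      _ = (1/2:ℝ)^k := by rw [← mul_pow]; norm_num
  · constructor <;> norm_num
  · have hz : (fun k : ℕ => (catalan k : ℝ) * (0:ℝ)^(k+1)/(k+1)) = fun _ => (0:ℝ) := by
      funext k; simp
    rw [hz]; exact summable_zero
  · constructor <;> [linarith; linarith]

lemma sqrt34 : Real.sqrt (3/4) = Real.sqrt 3 / 2 := by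
  rw [Real.sqrt_div (by norm_num : (0:ℝ) ≤ 3) 4,
    show (4:ℝ) = 2^2 by norm_num, Real.sqrt_sq (by norm_num : (0:ℝ) ≤ 2)]

lemma S1_eq : (∑' k, (catalan k : ℝ) * (1/16:ℝ)^(k+1)/(k+1)) = Hfun (1/16) := by
  have key := eq_of_has_deriv_right_eq (a := (0:ℝ)) (b := 1/16)
    (f' := fun x => 2/(1+Real.sqrt (1-4*x)))
    (f := fun z => ∑' k, (catalan k : ℝ) * z^(k+1)/(k+1)) (g := Hfun)
    (fun x hx => by
      have h := S1_hasDeriv (y := x) (by have := hx.1; norm_num at this ⊢; linarith)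
        (by have := hx.2; norm_num at this ⊢; linarith)
      rw [(cat_hasSum hx.1 (le_of_lt hx.2)).tsum_eq] at h
      exact h.hasDerivWithinAt)
    (fun x hx => (H_hasDeriv (y := x)
      (by have := hx.2; norm_num at this ⊢; linarith)).hasDerivWithinAt)
    (fun x hx => by
      have h := S1_hasDeriv (y := x) (by have := hx.1; norm_num at this ⊢; linarith)
        (by have := hx.2; norm_num at this ⊢; linarith)
      exact h.continuousAt.continuousWithinAt)
    (fun x hx => (H_hasDeriv (y := x)
      (by have := hx.2; norm_num at this ⊢; linarith)).continuousAt.continuousWithinAt)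
    (by
      have h0 : (fun k : ℕ => (catalan k : ℝ) * (0:ℝ)^(k+1)/(k+1)) = fun _ => (0:ℝ) := by
        funext k; simp
      simp only [h0, tsum_zero]
      simp [Hfun, Real.sqrt_one])
  exact key (1/16) (by constructor <;> norm_num)

lemma cat_div_hasSum : HasSum (fun k => (catalan k : ℝ) / (16^k * (k+1)))
    (16 * (Real.log ((2+Real.sqrt 3)/4) + 1 - Real.sqrt 3/2)) := by
  have hsum : Summable (fun k => (catalan k : ℝ) * (1/16:ℝ)^(k+1)/(k+1)) := by
    have hle : ∀ k : ℕ, (catalan k : ℝ) * (1/16:ℝ)^(k+1)/(k+1) ≤ (1/4:ℝ)^k := by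
      intro k
      have h1 : (catalan k : ℝ) * (1/16:ℝ)^(k+1)/(k+1) ≤ (catalan k : ℝ) * (1/16:ℝ)^k := by
        rw [pow_succ, div_le_iff₀ (by positivity : (0:ℝ) < (k:ℝ)+1)]
        have hc : (0:ℝ) ≤ (catalan k : ℝ) * (1/16:ℝ)^k := by positivity
        nlinarith [Nat.cast_nonneg (α := ℝ) k]
      calc (catalan k : ℝ) * (1/16:ℝ)^(k+1)/(k+1) ≤ (catalan k : ℝ) * (1/16:ℝ)^k := h1
        _ ≤ 4^k * (1/16:ℝ)^k := mul_le_mul_of_nonneg_right (catalan_le_four_pow _) (by positivity)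
        _ = (1/4:ℝ)^k := by rw [← mul_pow]; norm_num
    have hnn : ∀ k : ℕ, (0:ℝ) ≤ (catalan k : ℝ) * (1/16:ℝ)^(k+1)/(k+1) := fun k => by positivity
    exact Summable.of_nonneg_of_le hnn hle
      (summable_geometric_of_lt_one (by norm_num) (by norm_num))
  have hH : Hfun (1/16) = Real.log ((2+Real.sqrt 3)/4) + 1 - Real.sqrt 3/2 := by
    have : (1:ℝ) - 4*(1/16) = 3/4 := by norm_num
    rw [Hfun, this, sqrt34]
    congr 2
    ring
  have hs1 : HasSum (fun k => (catalan k : ℝ) * (1/16:ℝ)^(k+1)/(k+1)) (Hfun (1/16)) := by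
    rw [← S1_eq]; exact hsum.hasSum
  have h16 := hs1.mul_left 16
  rw [hH] at h16
  convert h16 using 2 with k
  · rfl
  rw [pow_succ]
  field_simp
  rw [mul_assoc, ← mul_pow]; norm_num

lemma cb_le_four {n : ℕ} : (Nat.centralBinom n : ℝ) ≤ 4^n := by
  exact_mod_cast centralBinom_le_four_pow n

noncomputable def Ut (m n : ℕ) : ℝ :=
  (Nat.centralBinom (n+1) : ℝ) / 16^(n+1) * ((2*(n:ℝ)+3)/(8*((n:ℝ)+2)))^m /
    (((m:ℝ)+(n:ℝ)+2) * ((n:ℝ)+2))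

noncomputable def Vt (m n : ℕ) : ℝ :=
  (Nat.centralBinom (n+1) : ℝ) / 16^(n+1) * ((2*(n:ℝ)+1)/(8*((n:ℝ)+1)))^m /
    (((m:ℝ)+(n:ℝ)+2) * ((n:ℝ)+1))

lemma Ut_nonneg (m n : ℕ) : 0 ≤ Ut m n := by
  unfold Ut; positivity

lemma Vt_nonneg (m n : ℕ) : 0 ≤ Vt m n := by
  unfold Vt; positivity

lemma cb_div_le (n : ℕ) : (Nat.centralBinom (n+1) : ℝ) / 16^(n+1) ≤ (1/4:ℝ)^n := by
  have h1 : (Nat.centralBinom (n+1) : ℝ) ≤ 4^(n+1) := cb_le_four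
  rw [div_le_iff₀ (by positivity)]
  calc (Nat.centralBinom (n+1) : ℝ) ≤ 4^(n+1) := h1
    _ ≤ 4^(n+2) := pow_le_pow_right₀ (by norm_num) (by omega)
    _ = (1/4:ℝ)^n * 16^(n+1) := by
        rw [div_pow, one_pow, show (16:ℝ)=4^2 by norm_num, ← pow_mul, one_div,
          inv_mul_eq_div, eq_div_iff (by positivity), ← pow_add]
        congr 1
        omega

lemma Ut_le (m n : ℕ) : Ut m n ≤ (1/4:ℝ)^m * (1/4:ℝ)^n := by
  unfold Ut
  have hr : ((2*(n:ℝ)+3)/(8*((n:ℝ)+2)))^m ≤ (1/4:ℝ)^m := by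
    apply pow_le_pow_left₀ (by positivity)
    rw [div_le_iff₀ (by positivity)]
    push_cast; linarith [Nat.cast_nonneg (α := ℝ) n]
  have hD : (1:ℝ) ≤ ((m:ℝ)+(n:ℝ)+2) * ((n:ℝ)+2) := by
    nlinarith [Nat.cast_nonneg (α := ℝ) n, Nat.cast_nonneg (α := ℝ) m]
  calc (Nat.centralBinom (n+1) : ℝ) / 16^(n+1) * ((2*(n:ℝ)+3)/(8*((n:ℝ)+2)))^m /
      (((m:ℝ)+(n:ℝ)+2) * ((n:ℝ)+2))
      ≤ (Nat.centralBinom (n+1) : ℝ) / 16^(n+1) * ((2*(n:ℝ)+3)/(8*((n:ℝ)+2)))^m := by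
        apply div_le_self (by positivity) hD
    _ ≤ (1/4:ℝ)^n * (1/4:ℝ)^m :=
        mul_le_mul (cb_div_le n) hr (by positivity) (by positivity)
    _ = (1/4:ℝ)^m * (1/4:ℝ)^n := by ring

lemma Vt_le (m n : ℕ) : Vt m n ≤ (1/4:ℝ)^m * (1/4:ℝ)^n := by
  unfold Vt
  have hr : ((2*(n:ℝ)+1)/(8*((n:ℝ)+1)))^m ≤ (1/4:ℝ)^m := by
    apply pow_le_pow_left₀ (by positivity)
    rw [div_le_iff₀ (by positivity)]
    push_cast; linarith [Nat.cast_nonneg (α := ℝ) n]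
  have hD : (1:ℝ) ≤ ((m:ℝ)+(n:ℝ)+2) * ((n:ℝ)+1) := by
    nlinarith [Nat.cast_nonneg (α := ℝ) n, Nat.cast_nonneg (α := ℝ) m]
  calc (Nat.centralBinom (n+1) : ℝ) / 16^(n+1) * ((2*(n:ℝ)+1)/(8*((n:ℝ)+1)))^m /
      (((m:ℝ)+(n:ℝ)+2) * ((n:ℝ)+1))
      ≤ (Nat.centralBinom (n+1) : ℝ) / 16^(n+1) * ((2*(n:ℝ)+1)/(8*((n:ℝ)+1)))^m := by
        apply div_le_self (by positivity) hD
    _ ≤ (1/4:ℝ)^n * (1/4:ℝ)^m :=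
        mul_le_mul (cb_div_le n) hr (by positivity) (by positivity)
    _ = (1/4:ℝ)^m * (1/4:ℝ)^n := by ring

lemma geom_prod_summable : Summable (fun p : ℕ × ℕ => (1/4:ℝ)^p.1 * (1/4:ℝ)^p.2) :=
  Summable.mul_of_nonneg
    (summable_geometric_of_lt_one (by norm_num) (by norm_num))
    (summable_geometric_of_lt_one (by norm_num) (by norm_num))
    (fun _ => by positivity) (fun _ => by positivity)

lemma Ut_summable : Summable (fun p : ℕ × ℕ => Ut p.1 p.2) :=
  Summable.of_nonneg_of_le (fun p => Ut_nonneg p.1 p.2) (fun p => Ut_le p.1 p.2)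
    geom_prod_summable

lemma Vt_summable : Summable (fun p : ℕ × ℕ => Vt p.1 p.2) :=
  Summable.of_nonneg_of_le (fun p => Vt_nonneg p.1 p.2) (fun p => Vt_le p.1 p.2)
    geom_prod_summable

lemma Ut_shift (m n : ℕ) : Vt m (n+1) = Ut (m+1) n := by
  unfold Ut Vt
  push_cast
  have hrec := Nat.succ_mul_centralBinom_succ (n+1)
  have hrecR : ((n:ℝ)+2) * (Nat.centralBinom (n+2) : ℝ)
      = 2 * (2*(n:ℝ)+3) * (Nat.centralBinom (n+1) : ℝ) := by
    exact_mod_cast congrArg (Nat.cast : ℕ → ℝ) hrec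
  have hn2 : ((n:ℝ)+2) ≠ 0 := by positivity
  have hcb2 : (Nat.centralBinom (n+2) : ℝ)
      = 2*(2*(n:ℝ)+3) * (Nat.centralBinom (n+1) : ℝ) / ((n:ℝ)+2) := by
    field_simp
    linarith [hrecR]
  simp only [show n+1+1 = n+2 from rfl]
  rw [hcb2, div_pow, div_pow, pow_succ, pow_succ]
  field_simp
  ring

lemma split_term (m n : ℕ) :
    (Nat.choose (2*(n+1)) (n+1) : ℝ) / (((m:ℝ) + ((n:ℝ)+1) + 1) * ((n:ℝ)+1) * (((n:ℝ)+1) + 1)) *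
      ((((n:ℝ)+1) * ((2*((n:ℝ)+1)+1)/(((n:ℝ)+1)+1))^m - (((n:ℝ)+1)+1) * ((2*((n:ℝ)+1)-1)/((n:ℝ)+1))^m) /
        (8^m * 16^(n+1)))
    = Ut m n - Vt m n := by
  unfold Ut Vt
  rw [show Nat.choose (2*(n+1)) (n+1) = Nat.centralBinom (n+1) from rfl]
  have h1 : ((n:ℝ)+1) ≠ 0 := by positivity
  have h2 : ((n:ℝ)+2) ≠ 0 := by positivity
  have hmn : ((m:ℝ)+(n:ℝ)+2) ≠ 0 := by positivity
  have h8 : ((8:ℝ))^m ≠ 0 := by positivity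
  have h16 : ((16:ℝ))^(n+1) ≠ 0 := by positivity
  rw [div_pow, div_pow, div_pow, div_pow, mul_pow, mul_pow]
  have e1 : (2*((n:ℝ)+1)+1) = 2*(n:ℝ)+3 := by ring
  have e2 : (2*((n:ℝ)+1)-1) = 2*(n:ℝ)+1 := by ring
  have e3 : (((n:ℝ)+1)+1) = (n:ℝ)+2 := by ring
  rw [e1, e2, e3]
  have hp1 : ((n:ℝ)+1)^m ≠ 0 := pow_ne_zero _ h1
  have hp2 : ((n:ℝ)+2)^m ≠ 0 := pow_ne_zero _ h2
  field_simp
  ring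

lemma Vt0_hasSum : HasSum (fun m => Vt m 0) (-8*Real.log (7/8) - 1) := by
  have h := Real.hasSum_pow_div_log_of_abs_lt_one (x := 1/8) (by rw [abs_of_pos] <;> norm_num)
  have h2 := (hasSum_nat_add_iff' (f := fun k : ℕ => ((1:ℝ)/8)^(k+1)/(k+1)) 1).mpr h
  simp only [Finset.sum_range_one] at h2
  have h3 := h2.mul_left 8
  convert h3 using 1
  · rfl
  · funext m
    show Vt m 0 = 8 * ((1/8:ℝ)^(m+1+1)/((m+1:ℕ)+1))
    unfold Vt
    rw [show Nat.centralBinom 1 = 2 from rfl]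
    push_cast
    norm_num
    rw [div_pow]
    field_simp
    have h88 : (1/8:ℝ)^m*8^m = 1 := by rw [← mul_pow]; norm_num
    linear_combination (-(m:ℝ)-2) * h88
  · have : (1:ℝ) - 1/8 = 7/8 := by norm_num
    rw [this]
    norm_num
    ring
lemma Ut0_hasSum : HasSum (fun n => Ut 0 n)
    (16 * (Real.log ((2+Real.sqrt 3)/4) + 1 - Real.sqrt 3/2) - 1) := by
  have h2 := (hasSum_nat_add_iff' (f := fun k : ℕ => (catalan k : ℝ)/(16^k*(k+1))) 1).mpr
    cat_div_hasSum
  simp only [Finset.sum_range_one] at h2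
  convert h2 using 1
  · rfl
  · funext n
    show Ut 0 n = (catalan (n+1) : ℝ)/(16^(n+1)*((n+1:ℕ)+1))
    unfold Ut
    have hcat : ((n:ℝ)+2) * (catalan (n+1) : ℝ) = (Nat.centralBinom (n+1) : ℝ) := by
      exact_mod_cast congrArg (Nat.cast : ℕ → ℝ) (succ_mul_catalan_eq_centralBinom (n+1))
    push_cast
    rw [pow_zero]
    rw [← hcat]
    field_simp
    ring
  · norm_num

/-- A double-series evaluation obtained from the modified Abel summation technique
applied to `B_n = x^n C(2n,n)/16^n` together with an integration argument.
The index `p : ℕ × ℕ` encodes `m = p.1 ≥ 0` and `n = p.2 + 1 ≥ 1`. -/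
theorem double_series_eval :
    HasSum
      (fun p : ℕ × ℕ =>
        let m : ℝ := p.1
        let n : ℝ := p.2 + 1
        (Nat.choose (2 * (p.2 + 1)) (p.2 + 1) : ℝ) / ((m + n + 1) * n * (n + 1)) *
          ((n * ((2 * n + 1) / (n + 1)) ^ p.1 - (n + 1) * ((2 * n - 1) / n) ^ p.1) /
            (8 ^ p.1 * 16 ^ (p.2 + 1))))
      (16 - 8 * Real.sqrt 3 + 8 * Real.log (7 * (2 + Real.sqrt 3) ^ 2 / 128)) := by
  have hfun : (fun p : ℕ × ℕ =>
        let m : ℝ := p.1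
        let n : ℝ := p.2 + 1
        (Nat.choose (2 * (p.2 + 1)) (p.2 + 1) : ℝ) / ((m + n + 1) * n * (n + 1)) *
          ((n * ((2 * n + 1) / (n + 1)) ^ p.1 - (n + 1) * ((2 * n - 1) / n) ^ p.1) /
            (8 ^ p.1 * 16 ^ (p.2 + 1))))
      = fun p : ℕ × ℕ => Ut p.1 p.2 - Vt p.1 p.2 :=
    funext fun p => split_term p.1 p.2
  rw [hfun]
  set SU := ∑' p : ℕ × ℕ, Ut p.1 p.2 with hSU
  set SV := ∑' p : ℕ × ℕ, Vt p.1 p.2 with hSV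
  have hsub : HasSum (fun p : ℕ × ℕ => Ut p.1 p.2 - Vt p.1 p.2) (SU - SV) :=
    Ut_summable.hasSum.sub Vt_summable.hasSum
  -- fiberwise sums
  have hUm : ∀ m : ℕ, HasSum (fun n => Ut m n) (∑' n, Ut m n) :=
    fun m => (Ut_summable.prod_factor m).hasSum
  have hVm : ∀ m : ℕ, HasSum (fun n => Vt m n) (∑' n, Vt m n) :=
    fun m => (Vt_summable.prod_factor m).hasSum
  have hgU : HasSum (fun m => ∑' n, Ut m n) SU :=
    Ut_summable.hasSum.prod_fiberwise hUm
  have hgV : HasSum (fun m => ∑' n, Vt m n) SV :=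
    Vt_summable.hasSum.prod_fiberwise hVm
  -- inner shift
  have hVshift : ∀ m : ℕ, HasSum (fun n => Vt m (n+1)) ((∑' n, Vt m n) - Vt m 0) := by
    intro m
    have := (hasSum_nat_add_iff' (f := fun n => Vt m n) 1).mpr (hVm m)
    simpa using this
  have hgUs : ∀ m : ℕ, (∑' n, Ut (m+1) n) = (∑' n, Vt m n) - Vt m 0 := by
    intro m
    have h1 : HasSum (fun n => Ut (m+1) n) ((∑' n, Vt m n) - Vt m 0) := by
      have := hVshift m
      simp only [Ut_shift] at this
      exact this
    exact h1.tsum_eq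
  -- outer shift
  have houter : HasSum (fun m => ∑' n, Ut (m+1) n) (SU - ∑' n, Ut 0 n) := by
    have := (hasSum_nat_add_iff' (f := fun m => ∑' n, Ut m n) 1).mpr hgU
    simpa using this
  have houter' : HasSum (fun m => (∑' n, Vt m n) - Vt m 0) (SU - ∑' n, Ut 0 n) := by
    have := houter
    simp only [hgUs] at this
    exact this
  have hVt0 : HasSum (fun m => Vt m 0) (SV - (SU - ∑' n, Ut 0 n)) := by
    have := hgV.sub houter'
    simpa using this
  have huniq : SV - (SU - ∑' n, Ut 0 n) = -8*Real.log (7/8) - 1 :=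
    hVt0.unique Vt0_hasSum
  have hU0 : (∑' n, Ut 0 n) = 16 * (Real.log ((2+Real.sqrt 3)/4) + 1 - Real.sqrt 3/2) - 1 :=
    Ut0_hasSum.tsum_eq
  have hval : SU - SV = 16 - 8 * Real.sqrt 3 + 8 * Real.log (7 * (2 + Real.sqrt 3) ^ 2 / 128) := by
    have h3 : (0:ℝ) < 2 + Real.sqrt 3 := by positivity
    have hlog : 16*Real.log ((2+Real.sqrt 3)/4) + 8*Real.log (7/8)
        = 8*Real.log (7*(2+Real.sqrt 3)^2/128) := by
      rw [Real.log_div (by positivity) (by norm_num),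
          Real.log_div (by norm_num) (by norm_num),
          Real.log_div (by positivity) (by norm_num),
          Real.log_mul (by norm_num) (by positivity),
          Real.log_pow]
      have h4 : Real.log 4 = 2*Real.log 2 := by
        rw [show (4:ℝ)=2^2 by norm_num, Real.log_pow]; push_cast; ring
      have h8 : Real.log 8 = 3*Real.log 2 := by
        rw [show (8:ℝ)=2^3 by norm_num, Real.log_pow]; push_cast; ring
      have h128 : Real.log 128 = 7*Real.log 2 := by
        rw [show (128:ℝ)=2^7 by norm_num, Real.log_pow]; push_cast; ring
      rw [h4, h8, h128]
      push_cast
      ring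
    have : SU - SV = (∑' n, Ut 0 n) - (-8*Real.log (7/8) - 1) := by linarith [huniq]
    rw [this, hU0]
    linarith [hlog]
  rw [hval] at hsub
  exact hsub
end
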